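/- arXiv:0811.2821 — 3 statements merged into one kernel-verified Lean document; each statement's English description precedes it below -/
import Mathlib

section
/- Let J and J′ be bounded open intervals and let u : ℂ(J) → ℂ be a nonconstant holomorphic map with u(ℂ(J)) ⊆ ℂ(J′) and u(J) ⊆ J′. Then for every θ ∈ (0,π), u(D(J,θ)) ⊆ D(J′,θ). If moreover u maps ℂ(J) ∩ ℂ₊ into ℂ₊ ∪ ℝ and ℂ(J) ∩ ℂ₋ into ℂ₋ ∪ ℝ, then u(D₊(J,θ)) ⊆ D₊(J′,θ) and u(D₋(J,θ)) ⊆ D₋(J′,θ). -/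
open Set Complex

noncomputable section

/-- The doubly-slit plane `ℂ(J)` for `J ⊆ ℝ`. -/
def CSlit (J : Set ℝ) : Set ℂ := {z : ℂ | z.im ≠ 0 ∨ z.re ∈ J}

/-- the ratio map -/
def qMap (a b : ℝ) (z : ℂ) : ℂ := ((b : ℂ) - z) / (z - (a : ℂ))

def phiMap (a b : ℝ) (z : ℂ) : ℂ := Complex.log (qMap a b z)

def psiMap (a b : ℝ) (w : ℂ) : ℂ := ((b : ℂ) + (a : ℂ) * Complex.exp w) / (1 + Complex.exp w)

lemma cslit_open (a b : ℝ) : IsOpen (CSlit (Set.Ioo a b)) := by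
  have : CSlit (Set.Ioo a b) = {z : ℂ | z.im ≠ 0} ∪ (Complex.re ⁻¹' Set.Ioo a b) := by
    ext z; simp [CSlit]
  rw [this]
  exact (isOpen_ne_fun Complex.continuous_im continuous_const).union
    (isOpen_Ioo.preimage Complex.continuous_re)

lemma ne_a {a b : ℝ} (hab : a < b) {z : ℂ} (hz : z ∈ CSlit (Set.Ioo a b)) : z ≠ (a : ℂ) := by
  rintro rfl
  rcases hz with h | h
  · simp at h
  · simp at h

lemma q_im (a b : ℝ) (z : ℂ) :
    (qMap a b z).im = (a - b) * z.im / Complex.normSq (z - (a : ℂ)) := by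
  rw [qMap, Complex.div_im]
  simp [Complex.sub_re, Complex.sub_im]
  ring

lemma q_real {a b : ℝ} (hab : a < b) {z : ℂ} (hz : z.im = 0) (hre : z.re ∈ Set.Ioo a b) :
    qMap a b z = (((b - z.re) / (z.re - a) : ℝ) : ℂ) ∧ 0 < (b - z.re) / (z.re - a) := by
  have hz' : z = (z.re : ℂ) := by
    apply Complex.ext <;> simp [hz]
  constructor
  · rw [qMap]; nth_rewrite 1 [hz']; nth_rewrite 2 [hz']
    push_cast
    ring
  · exact div_pos (by linarith [hre.2]) (by linarith [hre.1])

lemma q_im_ne {a b : ℝ} (hab : a < b) {z : ℂ} (hza : z ≠ (a:ℂ)) (h : z.im ≠ 0) :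
    (qMap a b z).im ≠ 0 := by
  rw [q_im]
  have hn : 0 < Complex.normSq (z - (a : ℂ)) := Complex.normSq_pos.2 (sub_ne_zero.2 hza)
  have : (a - b) * z.im ≠ 0 := mul_ne_zero (by linarith) h
  exact div_ne_zero this (ne_of_gt hn)

lemma q_slit {a b : ℝ} (hab : a < b) {z : ℂ} (hz : z ∈ CSlit (Set.Ioo a b)) :
    qMap a b z ∈ Complex.slitPlane := by
  by_cases him : z.im = 0
  · have hre : z.re ∈ Set.Ioo a b := by
      rcases hz with h | h
      · exact absurd him h
      · exact h
    rcases q_real hab him hre with ⟨hq, hpos⟩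
    left
    rw [hq, Complex.ofReal_re]
    exact hpos
  · right
    exact q_im_ne hab (ne_a hab hz) him

lemma q_ne_zero {a b : ℝ} (hab : a < b) {z : ℂ} (hz : z ∈ CSlit (Set.Ioo a b)) :
    qMap a b z ≠ 0 := Complex.slitPlane_ne_zero (q_slit hab hz)

lemma phi_im_neg {a b : ℝ} (hab : a < b) {z : ℂ} (hz : 0 < z.im) :
    (phiMap a b z).im ∈ Set.Ioo (-Real.pi) 0 := by
  have hza : z ≠ (a:ℂ) := by
    intro h; rw [h] at hz; simp at hz
  have hq : (qMap a b z).im < 0 := by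
    rw [q_im]
    have hn : 0 < Complex.normSq (z - (a : ℂ)) := Complex.normSq_pos.2 (sub_ne_zero.2 hza)
    apply div_neg_of_neg_of_pos _ hn
    exact mul_neg_of_neg_of_pos (by linarith) hz
  rw [phiMap, Complex.log_im]
  exact ⟨Complex.neg_pi_lt_arg _, Complex.arg_neg_iff.2 hq⟩

lemma phi_im_pos {a b : ℝ} (hab : a < b) {z : ℂ} (hz : z.im < 0) :
    (phiMap a b z).im ∈ Set.Ioo 0 Real.pi := by
  have hza : z ≠ (a:ℂ) := by
    intro h; rw [h] at hz; simp at hz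
  have hq : 0 < (qMap a b z).im := by
    rw [q_im]
    have hn : 0 < Complex.normSq (z - (a : ℂ)) := Complex.normSq_pos.2 (sub_ne_zero.2 hza)
    apply div_pos _ hn
    exact mul_pos_of_neg_of_neg (by linarith) hz
  rw [phiMap, Complex.log_im]
  constructor
  · have h1 : ¬ Complex.arg (qMap a b z) < 0 := by
      rw [Complex.arg_neg_iff]; linarith
    rcases lt_or_eq_of_le (not_lt.1 h1) with h | h
    · exact h
    · exfalso
      have := Complex.arg_eq_zero_iff.1 h.symm
      exact absurd this.2 (ne_of_gt hq)
  · exact Complex.arg_lt_pi_iff.2 (Or.inr (ne_of_gt hq))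

lemma phi_im_zero {a b : ℝ} (hab : a < b) {z : ℂ} (hz : z.im = 0) (hre : z.re ∈ Set.Ioo a b) :
    (phiMap a b z).im = 0 := by
  rcases q_real hab hz hre with ⟨hq, hpos⟩
  rw [phiMap, Complex.log_im, hq, Complex.arg_ofReal_of_nonneg hpos.le]

lemma phi_strip {a b : ℝ} (hab : a < b) {z : ℂ} (hz : z ∈ CSlit (Set.Ioo a b)) :
    |(phiMap a b z).im| < Real.pi := by
  rcases lt_trichotomy z.im 0 with h | h | h
  · rcases phi_im_pos hab h with ⟨h1, h2⟩
    rw [abs_of_pos h1]; exact h2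
  · have hre : z.re ∈ Set.Ioo a b := by
      rcases hz with h' | h'
      · exact absurd h h'
      · exact h'
    rw [phi_im_zero hab h hre]
    simpa using Real.pi_pos
  · rcases phi_im_neg hab h with ⟨h1, h2⟩
    rw [abs_of_neg h2]; linarith

lemma phi_diff {a b : ℝ} (hab : a < b) {z : ℂ} (hz : z ∈ CSlit (Set.Ioo a b)) :
    DifferentiableAt ℂ (phiMap a b) z := by
  have hza : z - (a:ℂ) ≠ 0 := sub_ne_zero.2 (ne_a hab hz)
  have h1 : DifferentiableAt ℂ (qMap a b) z := by
    apply DifferentiableAt.div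
    · exact (differentiableAt_const _).sub differentiableAt_id
    · exact differentiableAt_id.sub (differentiableAt_const _)
    · exact hza
  exact (Complex.differentiableAt_log (q_slit hab hz)).comp z h1

lemma exp_im_strip {w : ℂ} (hw : |w.im| < Real.pi) (h : (Complex.exp w).im = 0) : w.im = 0 := by
  rw [Complex.exp_im] at h
  rcases mul_eq_zero.1 h with h' | h'
  · exact absurd h' (ne_of_gt (Real.exp_pos _))
  · rcases abs_lt.1 hw with ⟨h1, h2⟩
    exact (Real.sin_eq_zero_iff_of_lt_of_lt h1 h2).1 h'

lemma exp_real_strip {w : ℂ} (hw : w.im = 0) :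
    Complex.exp w = ((Real.exp w.re : ℝ) : ℂ) ∧ 0 < Real.exp w.re := by
  refine ⟨Complex.ext ?_ ?_, Real.exp_pos _⟩
  · rw [Complex.exp_re, hw, Real.cos_zero, mul_one, Complex.ofReal_re]
  · rw [Complex.exp_im, hw, Real.sin_zero, mul_zero, Complex.ofReal_im]

lemma one_add_exp_ne {w : ℂ} (hw : |w.im| < Real.pi) : 1 + Complex.exp w ≠ 0 := by
  intro h
  have he : Complex.exp w = -1 := by linear_combination h
  have him : (Complex.exp w).im = 0 := by rw [he]; simp
  have h0 : w.im = 0 := exp_im_strip hw him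
  rcases exp_real_strip h0 with ⟨h1, h2⟩
  rw [h1] at he
  have : Real.exp w.re = -1 := by exact_mod_cast he
  linarith

lemma psi_im (a b : ℝ) {w : ℂ} (hw : 1 + Complex.exp w ≠ 0) :
    (psiMap a b w).im = (a - b) * (Complex.exp w).im / Complex.normSq (1 + Complex.exp w) := by
  rw [psiMap, Complex.div_im]
  simp [Complex.add_re, Complex.add_im, Complex.mul_re, Complex.mul_im]
  ring

lemma psi_mem (hab : a < b) {w : ℂ} (hw : |w.im| < Real.pi) :
    psiMap a b w ∈ CSlit (Set.Ioo a b) := by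
  have hne := one_add_exp_ne hw
  by_cases h : (Complex.exp w).im = 0
  · right
    have h0 := exp_im_strip hw h
    rcases exp_real_strip h0 with ⟨h1, h2⟩
    set t := Real.exp w.re with ht
    have hval : psiMap a b w = (((b + a * t) / (1 + t) : ℝ) : ℂ) := by
      rw [psiMap, h1]; push_cast; ring_nf
    rw [hval, Complex.ofReal_re]
    constructor
    · rw [lt_div_iff₀ (by linarith)]; nlinarith
    · rw [div_lt_iff₀ (by linarith)]; nlinarith
  · left
    rw [psi_im a b hne]
    have hn : 0 < Complex.normSq (1 + Complex.exp w) := Complex.normSq_pos.2 hne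
    exact div_ne_zero (mul_ne_zero (by linarith) h) (ne_of_gt hn)

lemma psi_real (hab : a < b) {x : ℝ} :
    (psiMap a b (x : ℂ)).im = 0 ∧ (psiMap a b (x : ℂ)).re ∈ Set.Ioo a b := by
  have h0 : ((x : ℂ)).im = 0 := Complex.ofReal_im x
  rcases exp_real_strip h0 with ⟨h1, h2⟩
  set t := Real.exp ((x:ℂ)).re with ht
  have hval : psiMap a b (x:ℂ) = (((b + a * t) / (1 + t) : ℝ) : ℂ) := by
    rw [psiMap, h1]; push_cast; ring_nf
  rw [hval, Complex.ofReal_re, Complex.ofReal_im]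
  refine ⟨rfl, ?_, ?_⟩
  · rw [lt_div_iff₀ (by linarith)]; nlinarith
  · rw [div_lt_iff₀ (by linarith)]; nlinarith

lemma psi_diff (a b : ℝ) {w : ℂ} (hw : |w.im| < Real.pi) :
    DifferentiableAt ℂ (psiMap a b) w := by
  have hne := one_add_exp_ne hw
  apply DifferentiableAt.div
  · exact (differentiableAt_const _).add ((differentiableAt_const _).mul (Complex.differentiable_exp _))
  · exact (differentiableAt_const _).add (Complex.differentiable_exp _)
  · exact hne

lemma psi_phi (hab : a < b) {z : ℂ} (hz : z ∈ CSlit (Set.Ioo a b)) :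
    psiMap a b (phiMap a b z) = z := by
  have hq0 := q_ne_zero hab hz
  have hza : z - (a:ℂ) ≠ 0 := sub_ne_zero.2 (ne_a hab hz)
  have hba : (b:ℂ) - a ≠ 0 := by
    rw [sub_ne_zero]
    exact_mod_cast ne_of_gt hab
  rw [psiMap, phiMap, Complex.exp_log hq0, qMap]
  rw [div_eq_iff]
  · field_simp
    ring
  · intro h
    apply hba
    have : ((z - a) + (b - z)) = (0 : ℂ) := by
      have h2 : (1 : ℂ) + (b - z)/(z - a) = 0 := h
      field_simp at h2
      linear_combination h2
    linear_combination this
lemma normSq_sinh (x y : ℝ) :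
    Complex.normSq (Complex.sinh ((x:ℂ) + (y:ℂ) * Complex.I)) = Real.sinh x ^ 2 + Real.sin y ^ 2 := by
  have h : Complex.sinh ((x:ℂ) + (y:ℂ) * Complex.I)
      = ((Real.sinh x * Real.cos y : ℝ) : ℂ) + ((Real.cosh x * Real.sin y : ℝ) : ℂ) * Complex.I := by
    rw [Complex.sinh_add, Complex.sinh_mul_I, Complex.cosh_mul_I]
    push_cast
    ring
  rw [h, Complex.normSq_add_mul_I]
  have h1 := Real.sin_sq_add_cos_sq y
  have h2 := Real.cosh_sq x
  nlinarith

lemma normSq_cosh (x y : ℝ) :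
    Complex.normSq (Complex.cosh ((x:ℂ) + (y:ℂ) * Complex.I)) = Real.sinh x ^ 2 + Real.cos y ^ 2 := by
  have h : Complex.cosh ((x:ℂ) + (y:ℂ) * Complex.I)
      = ((Real.cosh x * Real.cos y : ℝ) : ℂ) + ((Real.sinh x * Real.sin y : ℝ) : ℂ) * Complex.I := by
    rw [Complex.cosh_add, Complex.sinh_mul_I, Complex.cosh_mul_I]
    push_cast
    ring
  rw [h, Complex.normSq_add_mul_I]
  have h1 := Real.sin_sq_add_cos_sq y
  have h2 := Real.cosh_sq x
  nlinarith

lemma cosh_ne_zero_strip {v : ℂ} (hv : |v.im| < Real.pi / 2) : Complex.cosh v ≠ 0 := by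
  have hv' : v = (v.re : ℂ) + (v.im : ℂ) * Complex.I := (Complex.re_add_im v).symm
  intro h
  have h2 : Complex.normSq (Complex.cosh v) = 0 := by rw [h]; simp
  rw [hv', normSq_cosh] at h2
  have hc : 0 < Real.cos v.im := by
    apply Real.cos_pos_of_mem_Ioo
    constructor
    · rcases abs_lt.1 hv with ⟨h1, _⟩; linarith
    · rcases abs_lt.1 hv with ⟨_, h1⟩; linarith
  nlinarith

lemma sin_sq_lt_cos_sq {y : ℝ} (hy : |y| < Real.pi / 4) : Real.sin y ^ 2 < Real.cos y ^ 2 := by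
  have h2 : Real.cos (2 * y) = Real.cos y ^ 2 - Real.sin y ^ 2 := Real.cos_two_mul' y
  have hc : 0 < Real.cos (2 * y) := by
    apply Real.cos_pos_of_mem_Ioo
    rcases abs_lt.1 hy with ⟨h1, h3⟩
    constructor <;> [linarith; linarith]
  nlinarith

lemma abs_tanh_lt_one {v : ℂ} (hv : |v.im| < Real.pi / 4) : ‖Complex.tanh v‖ < 1 := by
  have hv2 : |v.im| < Real.pi / 2 := by
    have := Real.pi_pos; linarith [hv]
  have hc := cosh_ne_zero_strip hv2
  have hv' : v = (v.re : ℂ) + (v.im : ℂ) * Complex.I := (Complex.re_add_im v).symm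
  have hsq : ‖Complex.tanh v‖ ^ 2
      = (Real.sinh v.re ^ 2 + Real.sin v.im ^ 2) / (Real.sinh v.re ^ 2 + Real.cos v.im ^ 2) := by
    rw [Complex.tanh_eq_sinh_div_cosh, norm_div, div_pow, Complex.sq_norm, Complex.sq_norm]
    rw [hv', normSq_sinh, normSq_cosh]
    simp
  have hlt := sin_sq_lt_cos_sq hv
  have hden : 0 < Real.sinh v.re ^ 2 + Real.cos v.im ^ 2 := by nlinarith
  have h1 : ‖Complex.tanh v‖ ^ 2 < 1 := by
    rw [hsq, div_lt_one hden]; nlinarith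
  nlinarith [norm_nonneg (Complex.tanh v)]

lemma tan_le_abs_tanh {v : ℂ} (hv : |v.im| < Real.pi / 4) :
    Real.tan |v.im| ≤ ‖Complex.tanh v‖ := by
  have hv2 : |v.im| < Real.pi / 2 := by
    have := Real.pi_pos; linarith [hv]
  have hc := cosh_ne_zero_strip hv2
  have hv' : v = (v.re : ℂ) + (v.im : ℂ) * Complex.I := (Complex.re_add_im v).symm
  have hsq : ‖Complex.tanh v‖ ^ 2
      = (Real.sinh v.re ^ 2 + Real.sin v.im ^ 2) / (Real.sinh v.re ^ 2 + Real.cos v.im ^ 2) := by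
    rw [Complex.tanh_eq_sinh_div_cosh, norm_div, div_pow, Complex.sq_norm, Complex.sq_norm]
    rw [hv', normSq_sinh, normSq_cosh]
    simp
  have hcos : 0 < Real.cos v.im := by
    apply Real.cos_pos_of_mem_Ioo
    rcases abs_lt.1 hv2 with ⟨h1, h3⟩
    constructor <;> [linarith; linarith]
  have htan_sq : Real.tan |v.im| ^ 2 = Real.sin v.im ^ 2 / Real.cos v.im ^ 2 := by
    rcases abs_cases v.im with ⟨h1, _⟩ | ⟨h1, _⟩
    · rw [h1, Real.tan_eq_sin_div_cos, div_pow]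
    · rw [h1, Real.tan_neg, neg_sq, Real.tan_eq_sin_div_cos, div_pow]
  have hlt := sin_sq_lt_cos_sq hv
  have hS : 0 ≤ Real.sinh v.re ^ 2 := sq_nonneg _
  have hden : 0 < Real.sinh v.re ^ 2 + Real.cos v.im ^ 2 := by nlinarith
  have hsqle : Real.tan |v.im| ^ 2 ≤ ‖Complex.tanh v‖ ^ 2 := by
    rw [htan_sq, hsq, div_le_div_iff₀ (by positivity) hden]
    nlinarith
  have htn : 0 ≤ Real.tan |v.im| := Real.tan_nonneg_of_nonneg_of_le_pi_div_two (abs_nonneg _) (le_of_lt hv2)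
  nlinarith [norm_nonneg (Complex.tanh v)]

lemma tanh_ratio {v : ℂ} (hc : Complex.cosh v ≠ 0) :
    (1 + Complex.tanh v) / (1 - Complex.tanh v) = Complex.exp (2 * v) := by
  rw [Complex.tanh_eq_sinh_div_cosh]
  have h1 : 1 + Complex.sinh v / Complex.cosh v = Complex.exp v / Complex.cosh v := by
    rw [← Complex.cosh_add_sinh]; field_simp
  have h2 : 1 - Complex.sinh v / Complex.cosh v = Complex.exp (-v) / Complex.cosh v := by
    rw [← Complex.cosh_sub_sinh]; field_simp
  have h3 : Complex.exp v / Complex.cosh v / (Complex.exp (-v) / Complex.cosh v)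
      = Complex.exp v / Complex.exp (-v) := by
    field_simp
  rw [h1, h2, h3, ← Complex.exp_sub]
  ring_nf

lemma tanh_diff {v : ℂ} (hc : Complex.cosh v ≠ 0) : DifferentiableAt ℂ Complex.tanh v := by
  have : Complex.tanh = fun w => Complex.sinh w / Complex.cosh w := by
    funext w; exact Complex.tanh_eq_sinh_div_cosh w
  rw [this]
  exact (Complex.differentiable_sinh v).div (Complex.differentiable_cosh v) hc

def mMap (z : ℂ) : ℂ := 2 * Complex.log ((1 + z) / (1 - z))

lemma ball_facts {z : ℂ} (hz : ‖z‖ < 1) :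
    (1 : ℂ) - z ≠ 0 ∧ 0 < ((1 + z) / (1 - z)).re := by
  have h1 : (1 : ℂ) - z ≠ 0 := by
    intro h
    have : z = 1 := by linear_combination -h
    rw [this] at hz; simp at hz
  refine ⟨h1, ?_⟩
  rw [Complex.div_re]
  have hn : 0 < Complex.normSq (1 - z) := Complex.normSq_pos.2 h1
  have hns : Complex.normSq z < 1 := by
    have := Complex.sq_norm z
    nlinarith [norm_nonneg z]
  have key : (1 + z).re * (1 - z).re + (1 + z).im * (1 - z).im = 1 - Complex.normSq z := by
    simp [Complex.add_re, Complex.add_im, Complex.sub_re, Complex.sub_im, Complex.normSq_apply]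
    ring
  rw [← add_div, key]
  exact div_pos (by linarith) hn

lemma mMap_strip {z : ℂ} (hz : ‖z‖ < 1) : |(mMap z).im| < Real.pi := by
  rcases ball_facts hz with ⟨h1, h2⟩
  have harg : |Complex.arg ((1 + z) / (1 - z))| < Real.pi / 2 :=
    Complex.abs_arg_lt_pi_div_two_iff.2 (Or.inl h2)
  have him : (mMap z).im = 2 * Complex.arg ((1 + z) / (1 - z)) := by
    rw [mMap]
    simp [Complex.log_im]
  rw [him, abs_mul, (by norm_num : |(2:ℝ)| = 2)]
  linarith [harg]

lemma mMap_diff {z : ℂ} (hz : ‖z‖ < 1) : DifferentiableAt ℂ mMap z := by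
  rcases ball_facts hz with ⟨h1, h2⟩
  have : DifferentiableAt ℂ (fun w : ℂ => (1 + w) / (1 - w)) z := by
    apply DifferentiableAt.div
    · exact (differentiableAt_const _).add differentiableAt_id
    · exact (differentiableAt_const _).sub differentiableAt_id
    · exact h1
  exact (differentiableAt_const (2:ℂ)).mul (((Complex.differentiableAt_log (Or.inl h2)).comp z this : DifferentiableAt ℂ (Complex.log ∘ fun w : ℂ => (1 + w) / (1 - w)) z))

lemma mMap_zero : mMap 0 = 0 := by
  simp [mMap]

lemma mMap_tanh {v : ℂ} (hv : |v.im| < Real.pi / 2) : mMap (Complex.tanh v) = 4 * v := by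
  have hc : Complex.cosh v ≠ 0 := cosh_ne_zero_strip hv
  rw [mMap, tanh_ratio hc, Complex.log_exp]
  · ring
  · simp only [Complex.mul_im]
    rcases abs_lt.1 hv with ⟨h1, _⟩
    norm_num
    linarith
  · simp only [Complex.mul_im]
    rcases abs_lt.1 hv with ⟨_, h1⟩
    norm_num
    linarith

lemma div4_im (z : ℂ) : (z / 4).im = z.im / 4 := by
  rw [show (4:ℂ) = ((4:ℝ):ℂ) by norm_num, Complex.div_ofReal_im]

lemma contract {a b a' b' : ℝ} (hab : a < b) (hab' : a' < b') {u : ℂ → ℂ}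
    (hholo : DifferentiableOn ℂ u (CSlit (Set.Ioo a b)))
    (hmaps : Set.MapsTo u (CSlit (Set.Ioo a b)) (CSlit (Set.Ioo a' b')))
    (hJ : ∀ x : ℝ, x ∈ Set.Ioo a b → (u x).im = 0 ∧ (u x).re ∈ Set.Ioo a' b')
    {z : ℂ} (hz : z ∈ CSlit (Set.Ioo a b)) :
    |(phiMap a' b' (u z)).im| ≤ |(phiMap a b z).im| := by
  have pi_pos := Real.pi_pos
  set t := (phiMap a b z).im with htdef
  set X : ℂ := ((phiMap a b z).re : ℂ) with hXdef
  have hXim : X.im = 0 := Complex.ofReal_im _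
  set p : ℂ := psiMap a b X with hpdef
  obtain ⟨hpim, hpre⟩ : p.im = 0 ∧ p.re ∈ Set.Ioo a b := psi_real hab
  have hpC : p ∈ CSlit (Set.Ioo a b) := Or.inr hpre
  have hpeq : p = ((p.re : ℝ) : ℂ) := Complex.ext (by simp) (by simp [hpim])
  obtain ⟨hupim, hupre⟩ : (u p).im = 0 ∧ (u p).re ∈ Set.Ioo a' b' := by
    rw [hpeq]; exact hJ p.re hpre
  set c : ℂ := phiMap a' b' (u p) with hcdef
  have hcim : c.im = 0 := phi_im_zero hab' hupim hupre
  set F : ℂ → ℂ := fun ζ =>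
    Complex.tanh ((phiMap a' b' (u (psiMap a b (mMap ζ + X))) - c) / 4) with hFdef
  -- generic facts for ζ in the unit ball
  have key : ∀ ζ : ℂ, ‖ζ‖ < 1 →
      (DifferentiableAt ℂ F ζ ∧ ‖F ζ‖ < 1) := by
    intro ζ hζ
    have hmw : |(mMap ζ + X).im| < Real.pi := by
      rw [Complex.add_im, hXim, add_zero]; exact mMap_strip hζ
    have hψ : psiMap a b (mMap ζ + X) ∈ CSlit (Set.Ioo a b) := psi_mem hab hmw
    have huψ : u (psiMap a b (mMap ζ + X)) ∈ CSlit (Set.Ioo a' b') := hmaps hψ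
    have hvim : |((phiMap a' b' (u (psiMap a b (mMap ζ + X))) - c) / 4).im| < Real.pi / 4 := by
      rw [div4_im, Complex.sub_im, hcim, sub_zero, abs_div, (by norm_num : |(4:ℝ)| = 4)]
      have := phi_strip hab' huψ
      linarith
    constructor
    · apply DifferentiableAt.comp (g := Complex.tanh)
      · apply tanh_diff
        apply cosh_ne_zero_strip
        linarith [hvim]
      · apply DifferentiableAt.div_const
        apply DifferentiableAt.sub_const
        apply DifferentiableAt.comp (g := phiMap a' b')
        · exact phi_diff hab' huψ
        · apply DifferentiableAt.comp (g := u)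
          · exact hholo.differentiableAt ((cslit_open a b).mem_nhds hψ)
          · apply DifferentiableAt.comp (g := psiMap a b)
            · exact psi_diff a b hmw
            · exact (mMap_diff hζ).add_const X
    · exact abs_tanh_lt_one hvim
  have hF0 : F 0 = 0 := by
    rw [hFdef]
    simp only [mMap_zero, zero_add]
    rw [← hpdef, ← hcdef, sub_self, zero_div, Complex.tanh_zero]
  -- the special point
  have htlt : |t| < Real.pi := phi_strip hab hz
  have hsub : phiMap a b z - X = ((t : ℝ) : ℂ) * Complex.I := by
    rw [hXdef, htdef]
    exact Complex.ext (by simp) (by simp)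
  set ζ₀ : ℂ := Complex.tanh ((phiMap a b z - X) / 4) with hζ₀def
  have hζ₀eq : ζ₀ = Complex.tan (((t/4 : ℝ)) : ℂ) * Complex.I := by
    rw [hζ₀def, hsub]
    rw [show (((t : ℝ)) : ℂ) * Complex.I / 4 = (((t/4 : ℝ)) : ℂ) * Complex.I by push_cast; ring]
    exact Complex.tanh_mul_I _
  have habsζ₀ : ‖ζ₀‖ = Real.tan (|t| / 4) := by
    rw [hζ₀eq, norm_mul, Complex.norm_I, mul_one, ← Complex.ofReal_tan, Complex.norm_real, Real.norm_eq_abs]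
    rcases abs_cases t with ⟨h1, h2⟩ | ⟨h1, h2⟩
    · rw [h1, _root_.abs_of_nonneg]
      exact Real.tan_nonneg_of_nonneg_of_le_pi_div_two (by linarith) (by linarith [htlt])
    · have ht0 : t ≤ 0 := by linarith
      have htlt' : -t < Real.pi := by rw [h1] at htlt; exact htlt
      have h3 : Real.tan (t/4) ≤ 0 := by
        have h4 := Real.tan_nonneg_of_nonneg_of_le_pi_div_two (x := -(t/4))
          (by linarith) (by linarith)
        rw [Real.tan_neg] at h4
        linarith
      rw [h1, _root_.abs_of_nonpos h3, show -t/4 = -(t/4) by ring, Real.tan_neg]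
  have hζ₀lt : ‖ζ₀‖ < 1 := by
    rw [habsζ₀, ← Real.tan_pi_div_four]
    exact Real.tan_lt_tan_of_nonneg_of_lt_pi_div_two (by positivity) (by linarith) (by linarith)
  -- Schwarz
  have hschwarz : ‖F ζ₀‖ ≤ ‖ζ₀‖ := by
    apply Complex.norm_le_norm_of_mapsTo_ball (R := 1)
    · intro ζ hζ
      exact (key ζ (by rwa [Metric.mem_ball, Complex.dist_eq, sub_zero] at hζ)).1.differentiableWithinAt
    · intro ζ hζ
      rw [Metric.mem_ball, Complex.dist_eq, sub_zero] at hζ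
      rw [Metric.mem_closedBall, Complex.dist_eq, sub_zero]
      exact (key ζ hζ).2.le
    · exact hF0
    · exact hζ₀lt
  -- evaluate F ζ₀
  have hmζ₀ : mMap ζ₀ = phiMap a b z - X := by
    rw [hζ₀def, mMap_tanh]
    · ring
    · rw [hsub, show (((t : ℝ)) : ℂ) * Complex.I / 4 = (((t/4 : ℝ)) : ℂ) * Complex.I by push_cast; ring]
      rw [Complex.mul_I_im, Complex.ofReal_re, abs_div, (by norm_num : |(4:ℝ)| = 4)]
      linarith
  have hFζ₀ : F ζ₀ = Complex.tanh ((phiMap a' b' (u z) - c) / 4) := by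
    rw [hFdef]
    simp only
    rw [hmζ₀, sub_add_cancel, psi_phi hab hz]
  set s := (phiMap a' b' (u z)).im with hsdef
  have hslt : |s| < Real.pi := phi_strip hab' (hmaps hz)
  have hlow : Real.tan (|s| / 4) ≤ ‖F ζ₀‖ := by
    rw [hFζ₀]
    have him : ((phiMap a' b' (u z) - c) / 4).im = s / 4 := by
      rw [div4_im, Complex.sub_im, hcim, sub_zero]
    have h4 : |s / 4| < Real.pi / 4 := by
      rw [abs_div, (by norm_num : |(4:ℝ)| = 4)]; linarith
    have := tan_le_abs_tanh (v := (phiMap a' b' (u z) - c) / 4) (by rw [him]; exact h4)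
    rwa [him, abs_div, (by norm_num : |(4:ℝ)| = 4)] at this
  -- conclude
  by_contra hcon
  push_neg at hcon
  have : Real.tan (|t| / 4) < Real.tan (|s| / 4) :=
    Real.tan_lt_tan_of_nonneg_of_lt_pi_div_two (by positivity) (by linarith) (by linarith)
  rw [← habsζ₀] at this
  linarith [hschwarz, hlow]

/-- The upper part `D₊(J,θ)` of the Poincaré neighbourhood of `J = (a,b)`:
the region in the upper half-plane bounded by `J` and the circular arc through
`a` and `b` meeting `ℝ` at angle `θ`. -/
def Dplus (a b θ : ℝ) : Set ℂ :=
  {z : ℂ | 0 < z.im ∧ Real.pi - θ < Complex.arg ((z - (b : ℂ)) / (z - (a : ℂ)))}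

/-- `D₋(J,θ)`, the complex conjugate of `D₊(J,θ)`. -/
def Dminus (a b θ : ℝ) : Set ℂ := (fun z : ℂ => starRingEnd ℂ z) '' Dplus a b θ

/-- The Poincaré neighbourhood `D(J,θ) = D₊(J,θ) ∪ D₋(J,θ) ∪ J`. -/
def Dfull (a b θ : ℝ) : Set ℂ :=
  Dplus a b θ ∪ Dminus a b θ ∪ {z : ℂ | z.im = 0 ∧ z.re ∈ Set.Ioo a b}

/-- The open strip `S_θ = {w : |Im w| < θ}`. -/
def Sstrip (θ : ℝ) : Set ℂ := {w : ℂ | |w.im| < θ}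

lemma neg_q (a b : ℝ) (z : ℂ) : (z - (b:ℂ)) / (z - (a:ℂ)) = -qMap a b z := by
  rw [qMap, ← neg_div, neg_sub]

lemma mem_Dplus_iff {a b : ℝ} (hab : a < b) {θ : ℝ} {z : ℂ} (hz : 0 < z.im) :
    z ∈ Dplus a b θ ↔ -θ < (phiMap a b z).im := by
  have hq : (qMap a b z).im < 0 := by
    have hza : z ≠ (a:ℂ) := by intro h; rw [h] at hz; simp at hz
    rw [q_im]
    have hn : 0 < Complex.normSq (z - (a : ℂ)) := Complex.normSq_pos.2 (sub_ne_zero.2 hza)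
    exact div_neg_of_neg_of_pos (mul_neg_of_neg_of_pos (by linarith) hz) hn
  have harg : Complex.arg ((z - (b:ℂ)) / (z - (a:ℂ))) = (phiMap a b z).im + Real.pi := by
    rw [neg_q, Complex.arg_neg_eq_arg_add_pi_of_im_neg hq, phiMap, Complex.log_im]
  constructor
  · rintro ⟨-, h⟩
    rw [harg] at h
    linarith
  · intro h
    exact ⟨hz, by rw [harg]; linarith⟩

lemma conj_mem_iff {S : Set ℂ} {z : ℂ} :
    z ∈ (fun w : ℂ => starRingEnd ℂ w) '' S ↔ (starRingEnd ℂ z) ∈ S := by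
  constructor
  · rintro ⟨w, hw, rfl⟩
    simpa using hw
  · intro h
    exact ⟨starRingEnd ℂ z, h, by simp⟩

lemma mem_Dminus_iff {a b : ℝ} (hab : a < b) {θ : ℝ} {z : ℂ} (hz : z.im < 0) :
    z ∈ Dminus a b θ ↔ (phiMap a b z).im < θ := by
  have hza : z ≠ (a:ℂ) := by intro h; rw [h] at hz; simp at hz
  have hn : 0 < Complex.normSq (z - (a : ℂ)) := Complex.normSq_pos.2 (sub_ne_zero.2 hza)
  have hq : 0 < (qMap a b z).im := by
    rw [q_im]
    exact div_pos (mul_pos_of_neg_of_neg (by linarith) hz) hn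
  have hcz : (starRingEnd ℂ z).im = -z.im := Complex.conj_im z
  have hczpos : 0 < (starRingEnd ℂ z).im := by rw [hcz]; linarith
  rw [Dminus, conj_mem_iff, mem_Dplus_iff hab hczpos]
  have hqconj : qMap a b (starRingEnd ℂ z) = starRingEnd ℂ (qMap a b z) := by
    rw [qMap, qMap, map_div₀, map_sub, map_sub]
    simp
  have harg : (phiMap a b (starRingEnd ℂ z)).im = -(phiMap a b z).im := by
    rw [phiMap, phiMap, Complex.log_im, Complex.log_im, hqconj, Complex.arg_conj]
    rw [if_neg]
    intro h
    have := Complex.arg_eq_pi_iff.1 h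
    exact absurd this.2 (ne_of_gt hq)
  rw [harg]
  constructor <;> intro h <;> linarith

lemma Dminus_im {a b θ : ℝ} {z : ℂ} (hz : z ∈ Dminus a b θ) : z.im < 0 := by
  rw [Dminus, conj_mem_iff] at hz
  have := hz.1
  rw [Complex.conj_im] at this
  linarith

lemma Dplus_subset_cslit {a b θ : ℝ} : Dplus a b θ ⊆ CSlit (Set.Ioo a b) :=
  fun z hz => Or.inl (ne_of_gt hz.1)

lemma Dminus_subset_cslit {a b θ : ℝ} : Dminus a b θ ⊆ CSlit (Set.Ioo a b) :=
  fun z hz => Or.inl (ne_of_lt (Dminus_im hz))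

lemma Dfull_subset_cslit {a b θ : ℝ} : Dfull a b θ ⊆ CSlit (Set.Ioo a b) := by
  rintro z ((h | h) | h)
  · exact Dplus_subset_cslit h
  · exact Dminus_subset_cslit h
  · exact Or.inr h.2

lemma mem_Dfull_iff {a b : ℝ} (hab : a < b) {θ : ℝ} (hθ : θ ∈ Set.Ioo (0:ℝ) Real.pi)
    {z : ℂ} (hz : z ∈ CSlit (Set.Ioo a b)) :
    z ∈ Dfull a b θ ↔ |(phiMap a b z).im| < θ := by
  rcases lt_trichotomy z.im 0 with h | h | h
  · rcases phi_im_pos hab h with ⟨h1, h2⟩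
    rw [abs_of_pos h1]
    constructor
    · rintro ((hd | hd) | hd)
      · exact absurd hd.1 (by linarith)
      · exact (mem_Dminus_iff hab h).1 hd
      · exact absurd hd.1 (by linarith)
    · intro hlt
      exact Or.inl (Or.inr ((mem_Dminus_iff hab h).2 hlt))
  · have hre : z.re ∈ Set.Ioo a b := by
      rcases hz with h' | h'
      · exact absurd h h'
      · exact h'
    rw [phi_im_zero hab h hre]
    simp only [abs_zero]
    constructor
    · intro _; exact hθ.1
    · intro _; exact Or.inr ⟨h, hre⟩
  · rcases phi_im_neg hab h with ⟨h1, h2⟩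
    rw [abs_of_neg h2]
    constructor
    · rintro ((hd | hd) | hd)
      · have := (mem_Dplus_iff hab h).1 hd
        linarith
      · exact absurd (Dminus_im hd) (by linarith)
      · exact absurd hd.1 (by linarith)
    · intro hlt
      exact Or.inl (Or.inl ((mem_Dplus_iff hab h).2 (by linarith)))

lemma cslit_preconnected (a b : ℝ) (hab : a < b) : IsPreconnected (CSlit (Set.Ioo a b)) := by
  have hV : Convex ℝ (Complex.re ⁻¹' Set.Ioo a b) := by
    have h1 : Convex ℝ {z : ℂ | a < z.re} := convex_halfSpace_re_gt a
    have h2 : Convex ℝ {z : ℂ | z.re < b} := convex_halfSpace_re_lt b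
    have : Complex.re ⁻¹' Set.Ioo a b = {z : ℂ | a < z.re} ∩ {z : ℂ | z.re < b} := by
      ext z; simp [Set.mem_Ioo]
    rw [this]; exact h1.inter h2
  have hU : Convex ℝ {z : ℂ | 0 < z.im} := convex_halfSpace_im_gt 0
  have hL : Convex ℝ {z : ℂ | z.im < 0} := convex_halfSpace_im_lt 0
  have hmV : ∀ y : ℝ, Complex.mk ((a+b)/2) y ∈ Complex.re ⁻¹' Set.Ioo a b := by
    intro y
    simp only [Set.mem_preimage, Set.mem_Ioo]
    exact ⟨by show a < (a+b)/2; linarith, by show (a+b)/2 < b; linarith⟩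
  have hsplit : CSlit (Set.Ioo a b)
      = ({z : ℂ | 0 < z.im} ∪ Complex.re ⁻¹' Set.Ioo a b) ∪ {z : ℂ | z.im < 0} := by
    ext z
    simp only [CSlit, Set.mem_setOf_eq, Set.mem_union, Set.mem_preimage]
    constructor
    · rintro (h | h)
      · rcases lt_or_gt_of_ne h with h' | h'
        · right; exact h'
        · left; left; exact h'
      · left; right; exact h
    · rintro ((h | h) | h)
      · exact Or.inl (ne_of_gt h)
      · exact Or.inr h
      · exact Or.inl (ne_of_lt h)
  rw [hsplit]
  apply IsPreconnected.union (Complex.mk ((a+b)/2) (-1))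
  · right
    exact hmV (-1)
  · show (-1 : ℝ) < 0
    norm_num
  · apply IsPreconnected.union (Complex.mk ((a+b)/2) 1)
    · show (0:ℝ) < 1
      norm_num
    · exact hmV 1
    · exact hU.isPreconnected
    · exact hV.isPreconnected
  · exact hL.isPreconnected

lemma strict_upper {a b : ℝ} (hab : a < b) {u : ℂ → ℂ}
    (hholo : DifferentiableOn ℂ u (CSlit (Set.Ioo a b)))
    (hnonconst : ¬ ∃ w : ℂ, ∀ z ∈ CSlit (Set.Ioo a b), u z = w)
    (hupper : ∀ z ∈ CSlit (Set.Ioo a b), 0 < z.im → 0 ≤ (u z).im)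
    {z : ℂ} (hz : 0 < z.im) : 0 < (u z).im := by
  set U : Set ℂ := {w : ℂ | 0 < w.im} with hUdef
  have hUopen : IsOpen U := isOpen_lt continuous_const Complex.continuous_im
  have hUsub : U ⊆ CSlit (Set.Ioo a b) := fun w hw => Or.inl (ne_of_gt hw)
  have hA : AnalyticOnNhd ℂ u (CSlit (Set.Ioo a b)) :=
    hholo.analyticOnNhd (cslit_open a b)
  have hAU : AnalyticOnNhd ℂ u U := hA.mono hUsub
  have hUpre : IsPreconnected U := (convex_halfSpace_im_gt 0).isPreconnected
  rcases hAU.is_constant_or_isOpen hUpre with ⟨w, hw⟩ | hopen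
  · exfalso
    apply hnonconst
    refine ⟨w, fun ζ hζ => ?_⟩
    have hI : Complex.I ∈ CSlit (Set.Ioo a b) := Or.inl (by simp)
    have hIU : Complex.I ∈ U := by simp [hUdef]
    have hev : u =ᶠ[nhds Complex.I] (fun _ => w) :=
      Filter.eventually_of_mem (hUopen.mem_nhds hIU) (fun x hx => hw x hx)
    exact hA.eqOn_of_preconnected_of_eventuallyEq analyticOnNhd_const
      (cslit_preconnected a b hab) hI hev hζ
  · by_contra hcon
    push_neg at hcon
    have him0 : (u z).im = 0 := le_antisymm hcon (hupper z (hUsub hz) hz)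
    have hopen' : IsOpen (u '' U) := hopen U subset_rfl hUopen
    rcases Metric.isOpen_iff.1 hopen' (u z) ⟨z, hz, rfl⟩ with ⟨ε, hε, hball⟩
    have hmem : u z - (ε/2 : ℝ) * Complex.I ∈ Metric.ball (u z) ε := by
      rw [Metric.mem_ball, Complex.dist_eq]
      have : u z - (ε/2 : ℝ) * Complex.I - u z = -((ε/2 : ℝ) * Complex.I) := by ring
      rw [this, norm_neg, norm_mul, Complex.norm_I, mul_one, Complex.norm_real, Real.norm_eq_abs,
        abs_of_pos (by linarith)]
      linarith
    rcases hball hmem with ⟨z', hz', heq⟩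
    have h1 : 0 ≤ (u z').im := hupper z' (hUsub hz') hz'
    have h2 : (u z' ).im = -(ε/2) := by
      rw [heq, Complex.sub_im, him0]
      simp
    rw [h2] at h1
    linarith

lemma strict_lower {a b : ℝ} (hab : a < b) {u : ℂ → ℂ}
    (hholo : DifferentiableOn ℂ u (CSlit (Set.Ioo a b)))
    (hnonconst : ¬ ∃ w : ℂ, ∀ z ∈ CSlit (Set.Ioo a b), u z = w)
    (hlower : ∀ z ∈ CSlit (Set.Ioo a b), z.im < 0 → (u z).im ≤ 0)
    {z : ℂ} (hz : z.im < 0) : (u z).im < 0 := by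
  set U : Set ℂ := {w : ℂ | w.im < 0} with hUdef
  have hUopen : IsOpen U := isOpen_lt Complex.continuous_im continuous_const
  have hUsub : U ⊆ CSlit (Set.Ioo a b) := fun w hw => Or.inl (ne_of_lt hw)
  have hA : AnalyticOnNhd ℂ u (CSlit (Set.Ioo a b)) :=
    hholo.analyticOnNhd (cslit_open a b)
  have hAU : AnalyticOnNhd ℂ u U := hA.mono hUsub
  have hUpre : IsPreconnected U := (convex_halfSpace_im_lt 0).isPreconnected
  rcases hAU.is_constant_or_isOpen hUpre with ⟨w, hw⟩ | hopen
  · exfalso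
    apply hnonconst
    refine ⟨w, fun ζ hζ => ?_⟩
    have hI : -Complex.I ∈ CSlit (Set.Ioo a b) := Or.inl (by simp)
    have hIU : -Complex.I ∈ U := by simp [hUdef]
    have hev : u =ᶠ[nhds (-Complex.I)] (fun _ => w) :=
      Filter.eventually_of_mem (hUopen.mem_nhds hIU) (fun x hx => hw x hx)
    exact hA.eqOn_of_preconnected_of_eventuallyEq analyticOnNhd_const
      (cslit_preconnected a b hab) hI hev hζ
  · by_contra hcon
    push_neg at hcon
    have him0 : (u z).im = 0 := le_antisymm (hlower z (hUsub hz) hz) hcon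
    have hopen' : IsOpen (u '' U) := hopen U subset_rfl hUopen
    rcases Metric.isOpen_iff.1 hopen' (u z) ⟨z, hz, rfl⟩ with ⟨ε, hε, hball⟩
    have hmem : u z + (ε/2 : ℝ) * Complex.I ∈ Metric.ball (u z) ε := by
      rw [Metric.mem_ball, Complex.dist_eq]
      have : u z + (ε/2 : ℝ) * Complex.I - u z = (ε/2 : ℝ) * Complex.I := by ring
      rw [this, norm_mul, Complex.norm_I, mul_one, Complex.norm_real, Real.norm_eq_abs,
        abs_of_pos (by linarith)]
      linarith
    rcases hball hmem with ⟨z', hz', heq⟩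
    have h1 : (u z').im ≤ 0 := hlower z' (hUsub hz') hz'
    have h2 : (u z').im = ε/2 := by
      rw [heq, Complex.add_im, him0]
      simp
    rw [h2] at h1
    linarith


theorem stmt4 (a b a' b' : ℝ) (hab : a < b) (hab' : a' < b')
    (u : ℂ → ℂ)
    (hholo : DifferentiableOn ℂ u (CSlit (Set.Ioo a b)))
    (hnonconst : ¬ ∃ w : ℂ, ∀ z ∈ CSlit (Set.Ioo a b), u z = w)
    (hmaps : Set.MapsTo u (CSlit (Set.Ioo a b)) (CSlit (Set.Ioo a' b')))
    (hJ : ∀ x : ℝ, x ∈ Set.Ioo a b →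
      (u x).im = 0 ∧ (u x).re ∈ Set.Ioo a' b') :
    (∀ θ ∈ Set.Ioo (0 : ℝ) Real.pi, u '' Dfull a b θ ⊆ Dfull a' b' θ) ∧
    ((∀ z ∈ CSlit (Set.Ioo a b), 0 < z.im → 0 ≤ (u z).im) →
      (∀ z ∈ CSlit (Set.Ioo a b), z.im < 0 → (u z).im ≤ 0) →
      ∀ θ ∈ Set.Ioo (0 : ℝ) Real.pi,
        u '' Dplus a b θ ⊆ Dplus a' b' θ ∧ u '' Dminus a b θ ⊆ Dminus a' b' θ) := by
  constructor
  · intro θ hθ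
    rintro w ⟨z, hzD, rfl⟩
    have hzC : z ∈ CSlit (Set.Ioo a b) := Dfull_subset_cslit hzD
    have huC : u z ∈ CSlit (Set.Ioo a' b') := hmaps hzC
    have h1 := (mem_Dfull_iff hab hθ hzC).1 hzD
    have h2 := contract hab hab' hholo hmaps hJ hzC
    exact (mem_Dfull_iff hab' hθ huC).2 (lt_of_le_of_lt h2 h1)
  · intro hup hdown θ hθ
    constructor
    · rintro w ⟨z, hzD, rfl⟩
      have hzim : 0 < z.im := hzD.1
      have hzC : z ∈ CSlit (Set.Ioo a b) := Dplus_subset_cslit hzD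
      have huim : 0 < (u z).im := strict_upper hab hholo hnonconst hup hzim
      rcases phi_im_neg hab hzim with ⟨hp1, hp2⟩
      have h1 := (mem_Dplus_iff hab hzim).1 hzD
      have h2 := contract hab hab' hholo hmaps hJ hzC
      apply (mem_Dplus_iff hab' huim).2
      have habs : |(phiMap a b z).im| < θ := by
        rw [abs_of_neg hp2]; linarith
      have hfin : |(phiMap a' b' (u z)).im| < θ := lt_of_le_of_lt h2 habs
      rcases abs_lt.1 hfin with ⟨h3, _⟩
      exact h3
    · rintro w ⟨z, hzD, rfl⟩
      have hzim : z.im < 0 := Dminus_im hzD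
      have hzC : z ∈ CSlit (Set.Ioo a b) := Dminus_subset_cslit hzD
      have huim : (u z).im < 0 := strict_lower hab hholo hnonconst hdown hzim
      rcases phi_im_pos hab hzim with ⟨hp1, hp2⟩
      have h1 := (mem_Dminus_iff hab hzim).1 hzD
      have h2 := contract hab hab' hholo hmaps hJ hzC
      apply (mem_Dminus_iff hab' huim).2
      have habs : |(phiMap a b z).im| < θ := by
        rw [abs_of_pos hp1]; exact h1
      have hfin : |(phiMap a' b' (u z)).im| < θ := lt_of_le_of_lt h2 habs
      rcases abs_lt.1 hfin with ⟨_, h3⟩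
      exact h3
end
end

section
/- Let f ∈ A₁(c). Then for every x ∈ (−1,1): (1+c₁)·(f(x)−c₃) ≤ f′(x)·(x−c₁)·(1+x) and f′(x)·(x−c₁)·(1−x) ≤ (1−c₁)·(f(x)−c₃). Equivalently, for x ≠ c₁: (1+c₁)/((x−c₁)(1+x)) ≤ f′(x)/(f(x)−c₃) ≤ (1−c₁)/((x−c₁)(1−x)). -/
open Set Complex

noncomputable section

/-- `ℂ₁ = ℂ((−1,1))`. -/
def C1 : Set ℂ := CSlit (Set.Ioo (-1 : ℝ) 1)

/-- The class `A₁(c)` of normalized Herglotz functions. -/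
structure MemA1 (c₁ c₂ c₃ c₄ : ℝ) (f : ℂ → ℂ) : Prop where
  holo : DifferentiableOn ℂ f C1
  maps : Set.MapsTo f C1 C1
  symm : ∀ z ∈ C1, f (starRingEnd ℂ z) = starRingEnd ℂ (f z)
  upper : ∀ z ∈ C1, 0 < z.im → 0 ≤ (f z).im
  lower : ∀ z ∈ C1, z.im < 0 → (f z).im ≤ 0
  val1 : f (c₁ : ℂ) = (c₃ : ℂ)
  val2 : f (c₂ : ℂ) = (c₄ : ℂ)

namespace Complex

/-- compatibility: the complex absolute value as an `AbsoluteValue`. -/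
def abs : AbsoluteValue ℂ ℝ := IsAbsoluteValue.toAbsoluteValue (norm : ℂ → ℝ)

@[simp] lemma norm_eq_abs (z : ℂ) : ‖z‖ = Complex.abs z := rfl

lemma abs_apply (z : ℂ) : Complex.abs z = Real.sqrt (normSq z) := rfl

@[simp] lemma abs_ofReal (r : ℝ) : Complex.abs (r : ℂ) = |r| := Complex.norm_real r

@[simp] lemma abs_I : Complex.abs I = 1 := Complex.norm_I

@[simp] lemma abs_exp (z : ℂ) : Complex.abs (exp z) = Real.exp z.re := Complex.norm_exp z

lemma continuous_abs : Continuous Complex.abs := continuous_norm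

@[simp] lemma abs_two : Complex.abs 2 = 2 := Complex.norm_two

end Complex

open Filter Topology Real


lemma le_of_forall_pos_mul {a b K : ℝ} (h : ∀ δ : ℝ, 0 < δ → a ≤ b + δ * K) : a ≤ b := by
  by_contra hc
  push_neg at hc
  rcases le_or_gt K 0 with hK | hK
  · have := h 1 one_pos; nlinarith
  · have hpos : (0:ℝ) < (a - b) / (2 * K) := div_pos (by linarith) (by linarith)
    have h2 := h ((a - b) / (2 * K)) hpos
    have h3 : (a - b) / (2 * K) * K = (a - b) / 2 := by
      field_simp
    rw [h3] at h2
    linarith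

/-- quantitative: arg w close to π when w close to a negative real -/
lemma pi_sub_arg_le {w : ℂ} (him : 0 < w.im) (hre : w.re < 0) {η : ℝ} (hη : 0 < η)
    (hsmall : w.im / Complex.abs w ≤ Real.sin (min η (π/2))) : π - arg w ≤ η := by
  have hw0 : w ≠ 0 := fun h => by simp [h] at him
  have habs : 0 < Complex.abs w := Complex.abs.pos hw0
  rw [Complex.arg_of_re_neg_of_im_nonneg hre him.le]
  have h1 : Real.arcsin ((-w).im / Complex.abs w) = - Real.arcsin (w.im / Complex.abs w) := by
    simp [Real.arcsin_neg, neg_div]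
  rw [Complex.norm_eq_abs, h1]
  have hmin : 0 < min η (π/2) := lt_min hη (by positivity)
  have h2 : Real.arcsin (w.im / Complex.abs w) ≤ min η (π/2) := by
    calc Real.arcsin (w.im / Complex.abs w) ≤ Real.arcsin (Real.sin (min η (π/2))) :=
          Real.monotone_arcsin hsmall
      _ = min η (π/2) := Real.arcsin_sin (by
            have := Real.pi_pos
            have : (0:ℝ) < min η (π/2) := lt_min hη (by linarith)
            linarith) (min_le_right _ _)
  have := min_le_left η (π/2)
  linarith

/-- quantitative: arg w small when w close to a positive real -/
lemma arg_le_of_re_pos {w : ℂ} (hre : 0 < w.re) {η : ℝ} (hη : 0 < η)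
    (hsmall : w.im / Complex.abs w ≤ Real.sin (min η (π/2))) : arg w ≤ η := by
  rw [Complex.arg_of_re_nonneg hre.le]
  have hmin : 0 < min η (π/2) := lt_min hη (by positivity)
  have h2 : Real.arcsin (w.im / Complex.abs w) ≤ min η (π/2) := by
    calc Real.arcsin (w.im / Complex.abs w) ≤ Real.arcsin (Real.sin (min η (π/2))) :=
          Real.monotone_arcsin hsmall
      _ = min η (π/2) := Real.arcsin_sin (by
            have := Real.pi_pos
            have : (0:ℝ) < min η (π/2) := lt_min hη (by linarith)
            linarith) (min_le_right _ _)
  exact h2.trans (min_le_left _ _)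

/-- tendsto arg → π approaching a negative real through the upper half plane -/
lemma tendsto_arg_pi {α : Type*} {l : Filter α} {w : α → ℂ} {w₀ : ℂ}
    (him : ∀ᶠ i in l, 0 < (w i).im) (hw : Tendsto w l (𝓝 w₀))
    (hre : w₀.re < 0) (him0 : w₀.im = 0) :
    Tendsto (fun i => arg (w i)) l (𝓝 π) := by
  have hre' : ∀ᶠ i in l, (w i).re < 0 :=
    (Complex.continuous_re.continuousAt.tendsto.comp hw).eventually_lt_const hre
  have hw0 : w₀ ≠ 0 := fun h => by rw [h] at hre; simp at hre
  have habs : Tendsto (fun i => Complex.abs (w i)) l (𝓝 (Complex.abs w₀)) :=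
    (Complex.continuous_abs.continuousAt.tendsto.comp hw)
  have him' : Tendsto (fun i => (-(w i)).im) l (𝓝 0) := by
    have := (Complex.continuous_im.continuousAt.tendsto.comp hw)
    rw [him0] at this
    simpa using this.neg
  have hq : Tendsto (fun i => (-(w i)).im / Complex.abs (w i)) l (𝓝 0) := by
    have := him'.div habs (Complex.abs.ne_zero hw0)
    rwa [zero_div] at this
  have harc : Tendsto (fun i => Real.arcsin ((-(w i)).im / Complex.abs (w i)) + π) l (𝓝 π) := by
    have := (Real.continuous_arcsin.continuousAt.tendsto.comp hq)
    rw [Real.arcsin_zero] at this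
    simpa using this.add_const π
  apply harc.congr'
  filter_upwards [him, hre'] with i h1 h2
  rw [Complex.arg_of_re_neg_of_im_nonneg h2 h1.le]
  rfl

/-- the arg of a quotient tending to a positive real controls arg difference -/
lemma tendsto_arg_sub_zero {α : Type*} {l : Filter α} {u w : α → ℂ} {ζ : ℂ}
    (hu : ∀ᶠ i in l, 0 < (u i).im) (hw : ∀ᶠ i in l, 0 < (w i).im)
    (hζre : 0 < ζ.re) (hζim : ζ.im = 0)
    (h : Tendsto (fun i => u i / w i) l (𝓝 ζ)) :
    Tendsto (fun i => arg (u i) - arg (w i)) l (𝓝 0) := by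
  have hζs : ζ ∈ Complex.slitPlane := Or.inl hζre
  have hargq : Tendsto (fun i => arg (u i / w i)) l (𝓝 0) := by
    have := (Complex.continuousAt_arg hζs).tendsto.comp h
    rwa [show arg ζ = 0 from Complex.arg_eq_zero_iff.2 ⟨hζre.le, hζim⟩] at this
  apply hargq.congr'
  have hsmall : ∀ᶠ i in l, |arg (u i / w i)| < π/2 := by
    have : ∀ᶠ x in 𝓝 (0:ℝ), |x| < π/2 := by
      have hπ := Real.pi_pos
      have : {x : ℝ | |x| < π/2} ∈ 𝓝 (0:ℝ) := by
        apply IsOpen.mem_nhds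
        · exact isOpen_lt (continuous_abs) continuous_const
        · simp only [mem_setOf_eq, abs_zero]
          linarith
      exact this
    exact hargq.eventually this
  filter_upwards [hu, hw, hsmall] with i h1 h2 h3
  have hu0 : u i ≠ 0 := fun h => by simp [h] at h1
  have hw0 : w i ≠ 0 := fun h => by simp [h] at h2
  have hangle := Complex.arg_div_coe_angle hu0 hw0
  -- (arg (u/w) : Angle) = arg u - arg w
  have : ((arg (u i / w i) : ℝ) : Real.Angle) = ((arg (u i) - arg (w i) : ℝ) : Real.Angle) := by
    rw [hangle, Real.Angle.coe_sub]
  obtain ⟨k, hk⟩ := Real.Angle.angle_eq_iff_two_pi_dvd_sub.1 this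
  have hb1 : 0 ≤ arg (u i) := Complex.arg_nonneg_iff.2 h1.le
  have hb2 : 0 ≤ arg (w i) := Complex.arg_nonneg_iff.2 h2.le
  have hb3 : arg (u i) ≤ π := Complex.arg_le_pi _
  have hb4 : arg (w i) ≤ π := Complex.arg_le_pi _
  have habs : |arg (u i / w i) - (arg (u i) - arg (w i))| < 2 * π := by
    rw [abs_lt]
    constructor <;> [nlinarith [Real.pi_pos, abs_lt.1 h3]; nlinarith [Real.pi_pos, abs_lt.1 h3]]
  rw [hk] at habs
  have hπ := Real.pi_pos
  have : k = 0 := by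
    by_contra hk0
    have : (1:ℝ) ≤ |(k:ℝ)| := by
      have : (1:ℤ) ≤ |k| := Int.one_le_abs hk0
      exact_mod_cast this
    rw [abs_mul] at habs
    have : |(2*π)| = 2*π := abs_of_pos (by linarith)
    nlinarith [abs_nonneg ((k:ℝ))]
  rw [this] at hk
  simp at hk
  linarith [hk]

lemma eventually_arg_div_eq {α : Type*} {l : Filter α} {u w : α → ℂ} {ζ : ℂ}
    (hu : ∀ᶠ i in l, 0 < (u i).im) (hw : ∀ᶠ i in l, 0 < (w i).im)
    (hζre : 0 < ζ.re) (hζim : ζ.im = 0)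
    (h : Tendsto (fun i => u i / w i) l (𝓝 ζ)) :
    ∀ᶠ i in l, arg (u i) - arg (w i) = arg (u i / w i) := by
  have hζs : ζ ∈ Complex.slitPlane := Or.inl hζre
  have hargq : Tendsto (fun i => arg (u i / w i)) l (𝓝 0) := by
    have := (Complex.continuousAt_arg hζs).tendsto.comp h
    rwa [show arg ζ = 0 from Complex.arg_eq_zero_iff.2 ⟨hζre.le, hζim⟩] at this
  have hsmall : ∀ᶠ i in l, |arg (u i / w i)| < π/2 := by
    have hπ := Real.pi_pos
    have : {x : ℝ | |x| < π/2} ∈ 𝓝 (0:ℝ) := by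
      apply IsOpen.mem_nhds
      · exact isOpen_lt (continuous_abs) continuous_const
      · simp only [mem_setOf_eq, abs_zero]; linarith
    exact hargq.eventually this
  filter_upwards [hu, hw, hsmall] with i h1 h2 h3
  have hu0 : u i ≠ 0 := fun h => by simp [h] at h1
  have hw0 : w i ≠ 0 := fun h => by simp [h] at h2
  have hangle := Complex.arg_div_coe_angle hu0 hw0
  have : ((arg (u i / w i) : ℝ) : Real.Angle) = ((arg (u i) - arg (w i) : ℝ) : Real.Angle) := by
    rw [hangle, Real.Angle.coe_sub]
  obtain ⟨k, hk⟩ := Real.Angle.angle_eq_iff_two_pi_dvd_sub.1 this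
  have hb1 : 0 ≤ arg (u i) := Complex.arg_nonneg_iff.2 h1.le
  have hb2 : 0 ≤ arg (w i) := Complex.arg_nonneg_iff.2 h2.le
  have hb3 : arg (u i) ≤ π := Complex.arg_le_pi _
  have hb4 : arg (w i) ≤ π := Complex.arg_le_pi _
  have hπ := Real.pi_pos
  have habs : |arg (u i / w i) - (arg (u i) - arg (w i))| < 2 * π := by
    rw [abs_lt]
    constructor <;> [nlinarith [abs_lt.1 h3]; nlinarith [abs_lt.1 h3]]
  rw [hk] at habs
  have hk0 : k = 0 := by
    by_contra hk0
    have h1' : (1:ℝ) ≤ |(k:ℝ)| := by exact_mod_cast Int.one_le_abs hk0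
    rw [abs_mul] at habs
    have h2' : |(2*π : ℝ)| = 2*π := abs_of_pos (by linarith)
    nlinarith [abs_nonneg ((k:ℝ))]
  rw [hk0] at hk
  simp at hk
  linarith [hk]


/-- Maximum principle with boundary `limsup` bound. -/
lemma maxPrinciple {U : Set ℂ} (hU : IsOpen U) (hc : IsPreconnected U)
    (hb : Bornology.IsBounded U) {F : ℂ → ℂ}
    (hF : DifferentiableOn ℂ F U) {B : ℝ}
    (hbd : ∀ p ∈ frontier U, ∀ ε > 0, ∃ δ > 0, ∀ z ∈ U, dist z p < δ → ‖F z‖ ≤ B + ε) :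
    ∀ z ∈ U, ‖F z‖ ≤ B := by
  by_contra hcon
  push_neg at hcon
  obtain ⟨z₀, hz₀U, hz₀⟩ := hcon
  set ε := (‖F z₀‖ - B) / 2 with hε
  have hεpos : 0 < ε := by simp only [hε]; linarith
  set S := {z ∈ U | B + ε ≤ ‖F z‖} with hS
  have hz₀S : z₀ ∈ S := ⟨hz₀U, by simp only [hε]; linarith⟩
  have hKb : Bornology.IsBounded (closure S) :=
    (hb.subset (sep_subset _ _)).closure
  have hK : IsCompact (closure S) := Metric.isCompact_of_isClosed_isBounded isClosed_closure hKb
  have hKU : closure S ⊆ U := by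
    intro p hp
    by_contra hpU
    have hpf : p ∈ frontier U := by
      constructor
      · exact closure_mono (sep_subset _ _) hp
      · rwa [hU.interior_eq]
    obtain ⟨δ, hδpos, hδ⟩ := hbd p hpf (ε / 2) (by linarith)
    obtain ⟨z, hzS, hzd⟩ := Metric.mem_closure_iff.1 hp δ hδpos
    have h1 : ‖F z‖ ≤ B + ε / 2 := hδ z hzS.1 (by rwa [dist_comm])
    have h2 : B + ε ≤ ‖F z‖ := hzS.2
    linarith
  have hcont : ContinuousOn (fun z => ‖F z‖) (closure S) :=
    (hF.continuousOn.mono hKU).norm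
  obtain ⟨w, hwK, hwmax⟩ := hK.exists_isMaxOn ⟨z₀, subset_closure hz₀S⟩ hcont
  have hwU : w ∈ U := hKU hwK
  have hwge : B + ε ≤ ‖F w‖ := by
    have : ContinuousWithinAt (fun z => ‖F z‖) (closure S) w := hcont w hwK
    have hcl : ∀ z ∈ S, B + ε ≤ ‖F z‖ := fun z hz => hz.2
    -- w ∈ closure S, the inequality passes to closure
    have : w ∈ closure {z | z ∈ U ∧ B + ε ≤ ‖F z‖} := hwK
    rcases (mem_closure_iff_seq_limit.1 this) with ⟨u, huS, hulim⟩
    have : Tendsto (fun n => ‖F (u n)‖) atTop (𝓝 ‖F w‖) :=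
      ((hF.continuousOn.continuousAt (hU.mem_nhds hwU)).norm.tendsto.comp hulim)
    exact le_of_tendsto_of_tendsto tendsto_const_nhds this
      (Eventually.of_forall fun n => (huS n).2)
  have hmaxU : IsMaxOn (norm ∘ F) U w := by
    intro z hzU
    by_cases hz : z ∈ S
    · exact hwmax (subset_closure hz)
    · have : ‖F z‖ < B + ε := by
        by_contra h
        exact hz ⟨hzU, le_of_not_gt h⟩
      simp only [Function.comp, mem_setOf_eq]
      calc ‖F z‖ ≤ B + ε := this.le
        _ ≤ ‖F w‖ := hwge
  have heq := Complex.eqOn_of_isPreconnected_of_isMaxOn_norm hc hU hF hwU hmaxU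
  -- derive contradiction at a frontier point
  have hfr : ∃ p, p ∈ frontier U := by
    by_contra hfe
    push_neg at hfe
    have : IsClopen U := by
      constructor
      · rw [← closure_eq_iff_isClosed]
        apply subset_antisymm _ subset_closure
        intro p hp
        by_contra hpU
        exact hfe p ⟨hp, by rwa [hU.interior_eq]⟩
      · exact hU
    rcases isClopen_iff.1 this with h | h
    · exact absurd h (Nonempty.ne_empty ⟨z₀, hz₀U⟩)
    · have : ¬ Bornology.IsBounded (univ : Set ℂ) := by
        simpa using Metric.isBounded_iff_subset_ball (0:ℂ) |>.not.2 (by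
          push_neg
          intro r
          intro hsub
          have := hsub (mem_univ (r+1 : ℂ))
          have := hsub (mem_univ ((r+1:ℝ):ℂ))
          simp only [Metric.mem_ball, Complex.dist_eq, sub_zero, Complex.norm_real, Real.norm_eq_abs] at this
          rcases abs_lt.1 this with ⟨h1, h2⟩
          linarith)
      exact this (h ▸ hb)
  obtain ⟨p, hpf⟩ := hfr
  obtain ⟨δ, hδpos, hδ⟩ := hbd p hpf (ε/2) (by linarith)
  obtain ⟨z, hzU', hzd⟩ := Metric.mem_closure_iff.1 hpf.1 δ hδpos
  have h1 : ‖F z‖ ≤ B + ε/2 := hδ z hzU' (by rwa [dist_comm])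
  have h2 : F z = F w := heq hzU'
  rw [h2] at h1
  linarith

lemma argComparison {G₁ G₂ : ℂ → ℂ}
    (hd₁ : ∀ z : ℂ, 0 < z.im → DifferentiableAt ℂ G₁ z)
    (hd₂ : ∀ z : ℂ, 0 < z.im → DifferentiableAt ℂ G₂ z)
    (him₁ : ∀ z : ℂ, 0 < z.im → 0 < (G₁ z).im)
    (him₂ : ∀ z : ℂ, 0 < z.im → 0 < (G₂ z).im)
    (hbdry : ∀ p : ℝ, p ≠ 1 → p ≠ -1 → ∀ η : ℝ, 0 < η →
      ∃ δ > 0, ∀ z : ℂ, 0 < z.im → dist z p < δ → arg (G₁ z) - arg (G₂ z) ≤ η)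
    (hinf : ∀ η : ℝ, 0 < η → ∃ R : ℝ, ∀ z : ℂ, 0 < z.im → R ≤ Complex.abs z →
      arg (G₁ z) - arg (G₂ z) ≤ η) :
    ∀ z : ℂ, 0 < z.im → arg (G₁ z) ≤ arg (G₂ z) := by
  intro zs hzs
  have hπ := Real.pi_pos
  have key : ∀ η : ℝ, 0 < η → arg (G₁ zs) - arg (G₂ zs) ≤ η := by
    intro η hη
    obtain ⟨R₀, hR₀⟩ := hinf η hη
    set R : ℝ := max (max (R₀ + 1) (Complex.abs zs + 1)) 3 with hR
    have hR3 : (3:ℝ) ≤ R := le_max_right _ _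
    have hRz : Complex.abs zs + 1 ≤ R := le_trans (le_max_right _ _) (le_max_left _ _)
    have hRR0 : R₀ + 1 ≤ R := le_trans (le_max_left _ _) (le_max_left _ _)
    have hR1pos : (0:ℝ) < R + 1 := by linarith
    set U : Set ℂ := Metric.ball 0 R ∩ {z : ℂ | 0 < z.im} with hU
    have hUopen : IsOpen U := Metric.isOpen_ball.inter (isOpen_lt continuous_const Complex.continuous_im)
    have hUconv : Convex ℝ U := (convex_ball 0 R).inter (convex_halfSpace_im_gt 0)
    have hUb : Bornology.IsBounded U := Metric.isBounded_ball.subset inter_subset_left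
    have hUim : ∀ z ∈ U, 0 < z.im := fun z hz => hz.2
    -- membership facts for z ∈ U
    have hzmem : ∀ z ∈ U, (G₁ z ∈ Complex.slitPlane ∧ G₂ z ∈ Complex.slitPlane ∧
        z - 1 ∈ Complex.slitPlane ∧ z + 1 ∈ Complex.slitPlane) := by
      intro z hz
      exact ⟨Or.inr (him₁ z hz.2).ne', Or.inr (him₂ z hz.2).ne',
        Or.inr (by simp [Complex.sub_im]; exact hz.2.ne'),
        Or.inr (by simp [Complex.add_im]; exact hz.2.ne')⟩
    have main : ∀ δ : ℝ, 0 < δ →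
        arg (G₁ zs) - arg (G₂ zs) ≤ η + δ * (2 * Real.log (R+1)
          - Real.log (Complex.abs (zs - 1)) - Real.log (Complex.abs (zs + 1))) := by
      intro δ hδ
      set Φ : ℂ → ℂ := fun z => Complex.exp ((-Complex.I) * (Complex.log (G₁ z) - Complex.log (G₂ z))
        + (δ:ℂ) * (Complex.log (z - 1) + Complex.log (z + 1))) with hΦ
      have hnorm : ∀ z : ℂ, 0 < z.im → ‖Φ z‖ = Real.exp ((arg (G₁ z) - arg (G₂ z))
          + δ * (Real.log (Complex.abs (z - 1)) + Real.log (Complex.abs (z + 1)))) := by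
        intro z hz
        rw [hΦ]
        simp only [Complex.norm_eq_abs, Complex.abs_exp]
        congr 1
        simp [Complex.add_re, Complex.mul_re, Complex.sub_im, Complex.sub_re,
          Complex.log_re, Complex.log_im, Complex.ofReal_re, Complex.ofReal_im]
      have hΦdiff : DifferentiableOn ℂ Φ U := by
        intro z hz
        obtain ⟨hs1, hs2, hs3, hs4⟩ := hzmem z hz
        apply DifferentiableAt.differentiableWithinAt
        apply DifferentiableAt.cexp
        apply DifferentiableAt.add
        · exact (differentiableAt_const _).mul
            (((hd₁ z hz.2).clog hs1).sub ((hd₂ z hz.2).clog hs2))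
        · exact (differentiableAt_const _).mul
            ((((differentiableAt_fun_id).sub (differentiableAt_const _)).clog hs3).add
             (((differentiableAt_fun_id).add (differentiableAt_const _)).clog hs4))
      set B : ℝ := Real.exp (η + δ * (2 * Real.log (R+1))) with hB
      -- uniform bound on factors over U
      have hfac : ∀ z ∈ U, Real.log (Complex.abs (z - 1)) ≤ Real.log (R + 1)
          ∧ Real.log (Complex.abs (z + 1)) ≤ Real.log (R + 1) := by
        intro z hz
        have hz1 : Complex.abs (z - 1) ≤ R + 1 := by
          calc Complex.abs (z - 1) ≤ Complex.abs z + Complex.abs 1 := by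
                simpa using Complex.abs.sub_le_add z 1
            _ ≤ R + 1 := by
                have : Complex.abs z < R := by simpa [Complex.dist_eq] using hz.1
                simp; linarith
        have hz2 : Complex.abs (z + 1) ≤ R + 1 := by
          calc Complex.abs (z + 1) ≤ Complex.abs z + Complex.abs 1 := Complex.abs.add_le z 1
            _ ≤ R + 1 := by
                have : Complex.abs z < R := by simpa [Complex.dist_eq] using hz.1
                simp; linarith
        constructor
        · rcases eq_or_ne (Complex.abs (z-1)) 0 with h0 | h0
          · rw [h0, Real.log_zero]; exact Real.log_nonneg (by linarith)
          · exact Real.log_le_log (lt_of_le_of_ne (Complex.abs.nonneg _) (Ne.symm h0)) hz1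
        · rcases eq_or_ne (Complex.abs (z+1)) 0 with h0 | h0
          · rw [h0, Real.log_zero]; exact Real.log_nonneg (by linarith)
          · exact Real.log_le_log (lt_of_le_of_ne (Complex.abs.nonneg _) (Ne.symm h0)) hz2
      have hEbound : ∀ z ∈ U, arg (G₁ z) - arg (G₂ z) ≤ η → ‖Φ z‖ ≤ B := by
        intro z hz hv
        rw [hnorm z hz.2, hB]
        apply Real.exp_le_exp.2
        obtain ⟨hf1, hf2⟩ := hfac z hz
        have e1 : δ * Real.log (Complex.abs (z-1)) ≤ δ * Real.log (R+1) :=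
          mul_le_mul_of_nonneg_left hf1 hδ.le
        have e2 : δ * Real.log (Complex.abs (z+1)) ≤ δ * Real.log (R+1) :=
          mul_le_mul_of_nonneg_left hf2 hδ.le
        nlinarith
      have hbd : ∀ p ∈ frontier U, ∀ ε' > 0, ∃ δ' > 0, ∀ z ∈ U, dist z p < δ' →
          ‖Φ z‖ ≤ B + ε' := by
        intro p hp ε' hε'
        have hpcl : p ∈ closure U := hp.1
        have hcls : closure U ⊆ Metric.closedBall 0 R ∩ {z : ℂ | 0 ≤ z.im} := by
          apply closure_minimal _ (Metric.isClosed_closedBall.inter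
            (isClosed_le continuous_const Complex.continuous_im))
          intro z hz
          refine ⟨Metric.ball_subset_closedBall hz.1, ?_⟩
          have : (0:ℝ) < z.im := hz.2
          exact this.le
        obtain ⟨hpball, hpim⟩ := hcls hpcl
        have hpR : Complex.abs p ≤ R := by simpa [Complex.dist_eq] using hpball
        have hpnot : p ∉ U := by
          intro hcon; exact hp.2 (by rwa [hUopen.interior_eq])
        suffices hs : ∃ δ' > 0, ∀ z ∈ U, dist z p < δ' → ‖Φ z‖ ≤ B by
          obtain ⟨δ', h1, h2⟩ := hs
          exact ⟨δ', h1, fun z hz hd => (h2 z hz hd).trans (by linarith)⟩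
        by_cases hpim0 : p.im = 0
        · by_cases hp1 : p.re = 1 ∨ p.re = -1
          · refine ⟨(R+1) * Real.exp ((η - π)/δ), by positivity, ?_⟩
            intro z hz hdz
            rw [hnorm z hz.2, hB]
            apply Real.exp_le_exp.2
            obtain ⟨hf1, hf2⟩ := hfac z hz
            have hδ'eq : Real.log ((R+1) * Real.exp ((η - π)/δ))
                = Real.log (R+1) + (η-π)/δ := by
              rw [Real.log_mul (by positivity) (Real.exp_ne_zero _), Real.log_exp]
            have hvπ : arg (G₁ z) - arg (G₂ z) ≤ π := by
              have h1 := Complex.arg_le_pi (G₁ z)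
              have h2 := Complex.arg_nonneg_iff.2 (him₂ z hz.2).le
              linarith
            have he3 : δ * ((η - π)/δ) = η - π := by field_simp
            rcases hp1 with h1 | h1
            · have hpe : p = (1:ℂ) := Complex.ext (by simp [h1]) (by simp [hpim0])
              have habs1 : Complex.abs (z - 1) < (R+1) * Real.exp ((η - π)/δ) := by
                calc Complex.abs (z-1) = dist z p := by rw [hpe, Complex.dist_eq]; rfl
                  _ < _ := hdz
              have hz1ne : z - 1 ≠ 0 := by
                intro h0
                have h0' : z.im = 0 := by
                  have := congrArg Complex.im h0; simpa using this
                have : (0:ℝ) < z.im := hz.2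
                rw [h0'] at this; exact lt_irrefl 0 this
              have hlog : Real.log (Complex.abs (z-1)) ≤ Real.log (R+1) + (η-π)/δ := by
                rw [← hδ'eq]
                exact Real.log_le_log (Complex.abs.pos hz1ne) habs1.le
              have e1 : δ * Real.log (Complex.abs (z-1)) ≤ δ * (Real.log (R+1) + (η-π)/δ) :=
                mul_le_mul_of_nonneg_left hlog hδ.le
              have e2 : δ * Real.log (Complex.abs (z+1)) ≤ δ * Real.log (R+1) :=
                mul_le_mul_of_nonneg_left hf2 hδ.le
              nlinarith
            · have hpe : p = (-1:ℂ) := Complex.ext (by simp [h1]) (by simp [hpim0])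
              have habs1 : Complex.abs (z + 1) < (R+1) * Real.exp ((η - π)/δ) := by
                calc Complex.abs (z+1) = dist z p := by
                      rw [hpe, Complex.dist_eq]; ring_nf; rfl
                  _ < _ := hdz
              have hz1ne : z + 1 ≠ 0 := by
                intro h0
                have : z.im = 0 := by
                  have := congrArg Complex.im h0; simpa using this
                exact absurd this hz.2.ne'
              have hlog : Real.log (Complex.abs (z+1)) ≤ Real.log (R+1) + (η-π)/δ := by
                rw [← hδ'eq]
                exact Real.log_le_log (Complex.abs.pos hz1ne) habs1.le
              have e1 : δ * Real.log (Complex.abs (z+1)) ≤ δ * (Real.log (R+1) + (η-π)/δ) :=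
                mul_le_mul_of_nonneg_left hlog hδ.le
              have e2 : δ * Real.log (Complex.abs (z-1)) ≤ δ * Real.log (R+1) :=
                mul_le_mul_of_nonneg_left hf1 hδ.le
              nlinarith
          · push_neg at hp1
            obtain ⟨δ₁, hδ₁, hδ₁p⟩ := hbdry p.re hp1.1 hp1.2 η hη
            refine ⟨δ₁, hδ₁, ?_⟩
            intro z hz hdz
            have hpe : (p.re : ℂ) = p := Complex.ext (by simp) (by simp [hpim0])
            exact hEbound z hz (hδ₁p z hz.2 (by rwa [hpe]))
        · have hpim' : 0 < p.im := lt_of_le_of_ne hpim (Ne.symm hpim0)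
          have hpR' : R ≤ Complex.abs p := by
            by_contra hcon
            push_neg at hcon
            exact hpnot ⟨by simpa [Complex.dist_eq] using hcon, hpim'⟩
          refine ⟨1, one_pos, ?_⟩
          intro z hz hdz
          apply hEbound z hz
          apply hR₀ z hz.2
          have htri : Complex.abs p - Complex.abs z ≤ dist z p := by
            have h := norm_sub_norm_le p z
            rw [Complex.dist_eq]
            have : Complex.abs (p - z) = Complex.abs (z - p) := by
              rw [show p - z = -(z - p) by ring, map_neg_eq_map]
            simp only [Complex.norm_eq_abs] at h ⊢
            linarith [h, this.le, this.ge]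
          linarith
      have hzsU : zs ∈ U := by
        refine ⟨?_, hzs⟩
        simp only [Metric.mem_ball, Complex.dist_eq, sub_zero, Complex.norm_eq_abs]
        linarith
      have hmax := maxPrinciple hUopen hUconv.isPreconnected hUb hΦdiff hbd zs hzsU
      rw [hnorm zs hzs, hB] at hmax
      have hexp := Real.exp_le_exp.1 hmax
      nlinarith
    -- conclude from main by δ → 0
    exact le_of_forall_pos_mul main
  -- conclude: ∀ η > 0
  have : ∀ η : ℝ, 0 < η → arg (G₁ zs) ≤ arg (G₂ zs) + η := fun η hη => by linarith [key η hη]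
  linarith [le_of_forall_pos_le_add this]

lemma C1_open : IsOpen C1 := by
  have : C1 = (Complex.im ⁻¹' {0}ᶜ) ∪ (Complex.re ⁻¹' Ioo (-1) 1) := by
    ext z; simp [C1, CSlit, mem_preimage]
  rw [this]
  exact ((isOpen_compl_iff.2 isClosed_singleton).preimage Complex.continuous_im).union
    (isOpen_Ioo.preimage Complex.continuous_re)

lemma mem_C1_of_im {z : ℂ} (h : z.im ≠ 0) : z ∈ C1 := Or.inl h

lemma mem_C1_real {x : ℝ} (h : x ∈ Ioo (-1:ℝ) 1) : (x:ℂ) ∈ C1 := Or.inr (by simpa using h)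

lemma C1_preconnected : IsPreconnected C1 := by
  have h1 : IsPreconnected ({z : ℂ | 0 < z.im} ∪ Metric.ball 0 1) := by
    apply IsPreconnected.union (Complex.I/2)
    · simp [Complex.div_im]
    · simp only [Metric.mem_ball, Complex.dist_eq, sub_zero, Complex.norm_eq_abs]
      rw [show Complex.I / 2 = Complex.I * (2:ℂ)⁻¹ by ring, map_mul]
      simp [Complex.abs_I]
      norm_num
    · exact (convex_halfSpace_im_gt 0).isPreconnected
    · exact (convex_ball 0 1).isPreconnected
  have h2 : IsPreconnected ({z : ℂ | z.im < 0} ∪ Metric.ball 0 1) := by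
    apply IsPreconnected.union (-(Complex.I/2))
    · simp [Complex.div_im]
    · simp only [Metric.mem_ball, Complex.dist_eq, sub_zero, Complex.norm_eq_abs, map_neg_eq_map]
      rw [show Complex.I / 2 = Complex.I * (2:ℂ)⁻¹ by ring, map_mul]
      simp [Complex.abs_I]
      norm_num
    · exact (convex_halfSpace_im_lt 0).isPreconnected
    · exact (convex_ball 0 1).isPreconnected
  have hunion : C1 = ({z : ℂ | 0 < z.im} ∪ Metric.ball 0 1) ∪ ({z : ℂ | z.im < 0} ∪ Metric.ball 0 1) := by
    ext z
    simp only [C1, CSlit, mem_setOf_eq, mem_union, Metric.mem_ball, Complex.dist_eq, sub_zero,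
      Complex.norm_eq_abs, mem_Ioo]
    constructor
    · rintro (h | h)
      · rcases h.lt_or_gt with h' | h'
        · right; left; exact h'
        · left; left; exact h'
      · rcases eq_or_ne z.im 0 with h0 | h0
        · left; right
          have : Complex.abs z = |z.re| := by
            rw [Complex.abs_apply, Complex.normSq_apply, h0]
            rw [← Real.sqrt_sq_eq_abs, sq]
            norm_num
          rw [this]
          exact abs_lt.2 ⟨h.1, h.2⟩
        · rcases h0.lt_or_gt with h' | h'
          · right; left; exact h'
          · left; left; exact h'
    · rintro ((h | h) | (h | h))
      · exact Or.inl h.ne'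
      · rcases eq_or_ne z.im 0 with h0 | h0
        · right
          have : Complex.abs z = |z.re| := by
            rw [Complex.abs_apply, Complex.normSq_apply, h0]
            rw [← Real.sqrt_sq_eq_abs, sq]
            norm_num
          rw [this] at h
          exact abs_lt.1 h
        · exact Or.inl h0
      · exact Or.inl h.ne
      · rcases eq_or_ne z.im 0 with h0 | h0
        · right
          have : Complex.abs z = |z.re| := by
            rw [Complex.abs_apply, Complex.normSq_apply, h0]
            rw [← Real.sqrt_sq_eq_abs, sq]
            norm_num
          rw [this] at h
          exact abs_lt.1 h
        · exact Or.inl h0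
  rw [hunion]
  apply IsPreconnected.union 0
  · right; simp
  · right; simp
  · exact h1
  · exact h2

section basics
variable {c₁ c₂ c₃ c₄ : ℝ} {f : ℂ → ℂ}
variable (h1 : -1 < c₁) (h12 : c₁ < c₂) (h2 : c₂ < 1)
variable (h34 : c₃ < c₄) (hf : MemA1 c₁ c₂ c₃ c₄ f)

include hf in
lemma f_real {x : ℝ} (hx : x ∈ Ioo (-1:ℝ) 1) : (f x).im = 0 := by
  have h := hf.symm x (mem_C1_real hx)
  rw [Complex.conj_ofReal] at h
  have : (starRingEnd ℂ) (f x) = f x := h.symm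
  rcases Complex.conj_eq_iff_real.1 this with ⟨r, hr⟩
  simp [hr]

include hf in
lemma f_hasDerivAt {z : ℂ} (hz : z ∈ C1) : HasDerivAt f (deriv f z) z :=
  (hf.holo.differentiableAt (C1_open.mem_nhds hz)).hasDerivAt

include hf in
lemma f_re_hasDerivAt {x : ℝ} (hx : x ∈ Ioo (-1:ℝ) 1) :
    HasDerivAt (fun y : ℝ => (f y).re) (deriv f x).re x := by
  have h := (f_hasDerivAt hf (mem_C1_real hx)).comp_ofReal
  simpa [Function.comp_def] using (Complex.reCLM.hasFDerivAt.comp_hasDerivAt x h)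

include hf in
lemma f_deriv_im {x : ℝ} (hx : x ∈ Ioo (-1:ℝ) 1) : (deriv f x).im = 0 := by
  have h := (f_hasDerivAt hf (mem_C1_real hx)).comp_ofReal
  have him : HasDerivAt (fun y : ℝ => (f y).im) (deriv f x).im x := by
    simpa [Function.comp_def] using (Complex.imCLM.hasFDerivAt.comp_hasDerivAt x h)
  have hev : (fun y : ℝ => (f y).im) =ᶠ[𝓝 x] (fun _ => 0) := by
    filter_upwards [Ioo_mem_nhds hx.1 hx.2] with y hy
    exact f_real hf hy
  have h0 : HasDerivAt (fun _ : ℝ => (0:ℝ)) (deriv f x).im x := him.congr_of_eventuallyEq hev.symm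
  have := h0.unique (hasDerivAt_const x 0)
  linarith [this]

include hf in
lemma f_deriv_re_nonneg {x : ℝ} (hx : x ∈ Ioo (-1:ℝ) 1) : 0 ≤ (deriv f x).re := by
  have h := f_hasDerivAt hf (mem_C1_real hx)
  rw [hasDerivAt_iff_tendsto_slope] at h
  -- approach along the vertical path y ↦ x + y I
  have hmap : Tendsto (fun y : ℝ => (x:ℂ) + y * Complex.I) (𝓝[>] 0) (𝓝[≠] (x:ℂ)) := by
    apply tendsto_nhdsWithin_of_tendsto_nhds_of_eventually_within
    · have : Tendsto (fun y : ℝ => (x:ℂ) + y * Complex.I) (𝓝 0) (𝓝 ((x:ℂ) + 0 * Complex.I)) := by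
        apply Tendsto.add tendsto_const_nhds
        exact (Complex.continuous_ofReal.tendsto 0).mul tendsto_const_nhds
      simpa using this.mono_left nhdsWithin_le_nhds
    · filter_upwards [self_mem_nhdsWithin] with y hy
      simp only [mem_compl_iff, mem_singleton_iff]
      intro hcon
      have := congrArg Complex.im hcon
      simp at this
      exact absurd this (ne_of_gt hy)
  have hcomp := h.comp hmap
  have hre : Tendsto (fun y : ℝ => (slope f x ((x:ℂ) + y * Complex.I)).re) (𝓝[>] 0)
      (𝓝 (deriv f x).re) := (Complex.continuous_re.tendsto _).comp hcomp
  apply ge_of_tendsto hre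
  filter_upwards [self_mem_nhdsWithin] with y hy
  have hyne : ((x:ℂ) + y * Complex.I) - x ≠ 0 := by
    intro hcon
    have := congrArg Complex.im hcon
    simp at this
    exact absurd this (ne_of_gt hy)
  have him : ((x:ℂ) + y * Complex.I).im = y := by simp
  have hfim : 0 ≤ (f ((x:ℂ) + y * Complex.I)).im := by
    apply hf.upper _ (mem_C1_of_im (by rw [him]; exact (ne_of_gt hy)))
    rw [him]; exact hy
  rw [slope_def_field]
  have hdiff : ((x:ℂ) + y * Complex.I) - x = y * Complex.I := by ring
  rw [div_eq_mul_inv, hdiff]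
  have hinv : (y * Complex.I : ℂ)⁻¹ = -Complex.I / y := by
    rw [mul_inv, Complex.inv_I]
    field_simp
  rw [hinv]
  have : (f ((x:ℂ) + y * Complex.I) - f x) * (-Complex.I / y)
      = (f ((x:ℂ) + y * Complex.I) - f x) * (-Complex.I) / (y:ℂ) := by ring
  rw [this, Complex.div_ofReal_re]
  have : ((f ((x:ℂ) + y * Complex.I) - f x) * (-Complex.I)).re
      = (f ((x:ℂ) + y * Complex.I)).im - (f x).im := by
    simp [Complex.mul_re]
  rw [this, f_real hf hx, sub_zero]
  exact div_nonneg hfim (le_of_lt hy)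
end basics

section mono
variable {c₁ c₂ c₃ c₄ : ℝ} {f : ℂ → ℂ}

lemma f_re_monotone (hf : MemA1 c₁ c₂ c₃ c₄ f) :
    MonotoneOn (fun y : ℝ => (f y).re) (Ioo (-1:ℝ) 1) := by
  apply monotoneOn_of_deriv_nonneg (convex_Ioo _ _)
  · intro x hx
    exact (f_re_hasDerivAt hf hx).continuousAt.continuousWithinAt
  · intro x hx
    rw [interior_Ioo] at hx
    exact (f_re_hasDerivAt hf hx).differentiableAt.differentiableWithinAt
  · intro x hx
    rw [interior_Ioo] at hx
    rw [(f_re_hasDerivAt hf hx).deriv]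
    exact f_deriv_re_nonneg hf hx

lemma f_re_strictMono (h1 : -1 < c₁) (h12 : c₁ < c₂) (h2 : c₂ < 1) (h34 : c₃ < c₄)
    (hf : MemA1 c₁ c₂ c₃ c₄ f) :
    StrictMonoOn (fun y : ℝ => (f y).re) (Ioo (-1:ℝ) 1) := by
  intro a ha b hb hab
  rcases lt_or_eq_of_le (f_re_monotone hf ha hb hab.le) with h | h
  · exact h
  exfalso
  set c : ℝ := (f a).re with hc
  have hval : ∀ s : ℝ, s ∈ Icc a b → f s = (c:ℂ) := by
    intro s hs
    have hsIoo : s ∈ Ioo (-1:ℝ) 1 := ⟨lt_of_lt_of_le ha.1 hs.1, lt_of_le_of_lt hs.2 hb.2⟩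
    have hle1 : (f a).re ≤ (f s).re := f_re_monotone hf ha hsIoo hs.1
    have hle2 : (f s).re ≤ (f b).re := f_re_monotone hf hsIoo hb hs.2
    have hab' : (f (a:ℝ)).re = (f (b:ℝ)).re := h
    have hre : (f (s:ℝ)).re = c := by rw [hc]; linarith
    exact Complex.ext (by simpa using hre) (by simpa using f_real hf hsIoo)
  have hfana : AnalyticOnNhd ℂ f C1 := hf.holo.analyticOnNhd C1_open
  have hgana : AnalyticOnNhd ℂ (fun _ : ℂ => (c:ℂ)) C1 := analyticOnNhd_const
  set z₀ : ℂ := (((a+b)/2 : ℝ) : ℂ) with hz₀def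
  have hmid : ((a+b)/2 : ℝ) ∈ Ioo (-1:ℝ) 1 := by
    constructor <;> [nlinarith [ha.1, hb.1]; nlinarith [ha.2, hb.2]]
  have hz₀ : z₀ ∈ C1 := mem_C1_real hmid
  have hfreq : ∃ᶠ z in 𝓝[≠] z₀, f z = (c:ℂ) := by
    rw [frequently_iff]
    intro W hW
    rw [Metric.mem_nhdsWithin_iff] at hW
    obtain ⟨δ, hδpos, hδ⟩ := hW
    set t : ℝ := min ((b-a)/4) (δ/2) with ht
    have htpos : 0 < t := lt_min (by linarith) (by linarith)
    refine ⟨((a+b)/2 + t : ℝ), hδ ⟨?_, ?_⟩, ?_⟩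
    · rw [Metric.mem_ball, hz₀def]
      have : dist (((a+b)/2 + t : ℝ):ℂ) (((a+b)/2 : ℝ):ℂ) = |t| := by
        rw [Complex.dist_eq]
        rw [show (((a+b)/2 + t : ℝ):ℂ) - (((a+b)/2 : ℝ):ℂ) = ((t:ℝ):ℂ) by push_cast; ring]
        exact Complex.abs_ofReal t
      rw [this, abs_of_pos htpos]
      calc t ≤ δ/2 := min_le_right _ _
        _ < δ := by linarith
    · simp only [mem_compl_iff, mem_singleton_iff, hz₀def]
      intro hcon
      have : (a+b)/2 + t = (a+b)/2 := by exact_mod_cast hcon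
      linarith
    · apply hval
      constructor
      · have := min_le_left ((b-a)/4) (δ/2); nlinarith [min_le_left ((b-a)/4) (δ/2)]
      · nlinarith [min_le_left ((b-a)/4) (δ/2)]
  have heq := hfana.eqOn_of_preconnected_of_frequently_eq hgana C1_preconnected hz₀ hfreq
  have e1 : f c₁ = (c:ℂ) := heq (mem_C1_real ⟨h1, lt_trans h12 h2⟩)
  have e2 : f c₂ = (c:ℂ) := heq (mem_C1_real ⟨lt_trans h1 h12, h2⟩)
  rw [hf.val1] at e1
  rw [hf.val2] at e2
  have e3 : (c₃:ℂ) = (c₄:ℂ) := by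
    calc (c₃:ℂ) = (c:ℂ) := e1
      _ = (c₄:ℂ) := e2.symm
  have : c₃ = c₄ := by exact_mod_cast e3
  linarith
end mono

section inst
variable {c₁ c₂ c₃ c₄ : ℝ} {f : ℂ → ℂ} {ε : ℝ}

/-- the vertical approach path -/
lemma tendsto_path {x : ℝ} :
    Tendsto (fun y : ℝ => (x:ℂ) + y * Complex.I) (𝓝[>] 0) (𝓝[{z : ℂ | 0 < z.im}] (x:ℂ)) := by
  apply tendsto_nhdsWithin_of_tendsto_nhds_of_eventually_within
  · have : Tendsto (fun y : ℝ => (x:ℂ) + y * Complex.I) (𝓝 0) (𝓝 ((x:ℂ) + 0 * Complex.I)) := by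
      apply Tendsto.add tendsto_const_nhds
      exact (Complex.continuous_ofReal.tendsto 0).mul tendsto_const_nhds
    simpa using this.mono_left nhdsWithin_le_nhds
  · filter_upwards [self_mem_nhdsWithin] with y hy
    simp only [mem_setOf_eq, Complex.add_im, Complex.ofReal_im, Complex.mul_im,
      Complex.ofReal_re, Complex.I_im, Complex.I_re]
    simpa using hy

/-- conversion of an eventual bound on 𝓝[S] p to δ-form -/
lemma nhdsWithin_to_delta {p : ℝ} {η : ℝ} {v : ℂ → ℝ}
    (h : ∀ᶠ z in 𝓝[{z : ℂ | 0 < z.im}] (p:ℂ), v z ≤ η) :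
    ∃ δ > 0, ∀ z : ℂ, 0 < z.im → dist z p < δ → v z ≤ η := by
  rw [eventually_nhdsWithin_iff, Metric.eventually_nhds_iff] at h
  obtain ⟨δ, hδ, hh⟩ := h
  exact ⟨δ, hδ, fun z hz hd => hh hd hz⟩

set_option maxHeartbeats 1000000 in
lemma eps_main (h1 : -1 < c₁) (h12 : c₁ < c₂) (h2 : c₂ < 1) (h34 : c₃ < c₄)
    (hf : MemA1 c₁ c₂ c₃ c₄ f) (hε : 0 < ε)
    {x : ℝ} (hx : x ∈ Ioo (-1:ℝ) 1) (hxc : x ≠ c₁) :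
    (1 + c₁) * ((f x).re - c₃ + ε*(x - c₁)) ≤ ((deriv f x).re + ε) * (x - c₁) * (1 + x) ∧
    ((deriv f x).re + ε) * (x - c₁) * (1 - x) ≤ (1 - c₁) * ((f x).re - c₃ + ε*(x - c₁)) := by
  have hπ := Real.pi_pos
  have hc₁Ioo : c₁ ∈ Ioo (-1:ℝ) 1 := ⟨h1, h12.trans h2⟩
  have hc₁1 : -1 < c₁ := h1
  have hc₁2 : c₁ < 1 := h12.trans h2
  set S : Set ℂ := {z : ℂ | 0 < z.im} with hSdef
  set g : ℂ → ℂ := fun z => f z - (c₃:ℂ) + (ε:ℂ) * (z - c₁) with hgdef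
  set g₀ : ℂ → ℂ := fun z => (z - c₁) / (1 - z) with hg₀def
  set g₁ : ℂ → ℂ := fun z => (z - c₁) / (1 + z) with hg₁def
  set Rg : ℝ → ℝ := fun s => (f s).re - c₃ + ε * (s - c₁) with hRgdef
  -- basic facts about g
  have hgd : ∀ z ∈ C1, HasDerivAt g (deriv f z + ε) z := by
    intro z hz
    have h := ((f_hasDerivAt hf hz).sub_const (c₃:ℂ)).add
      ((((hasDerivAt_id z).sub_const (c₁:ℂ)).const_mul (ε:ℂ)))
    simpa [hgdef, Pi.add_def] using h
  have hgim : ∀ z : ℂ, 0 < z.im → 0 < (g z).im := by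
    intro z hz
    have h := hf.upper z (mem_C1_of_im hz.ne') hz
    have : (g z).im = (f z).im + ε * z.im := by
      simp [hgdef, Complex.add_im, Complex.sub_im, Complex.mul_im]
    rw [this]
    have : 0 < ε * z.im := mul_pos hε hz
    linarith
  have hgne : ∀ z : ℂ, 0 < z.im → g z ≠ 0 := by
    intro z hz h0
    have := hgim z hz
    rw [h0] at this
    simp at this
  have hgofReal : ∀ s : ℝ, s ∈ Ioo (-1:ℝ) 1 → g (s:ℂ) = ((Rg s : ℝ) : ℂ) := by
    intro s hs
    apply Complex.ext
    · simp [hgdef, hRgdef, Complex.add_re, Complex.sub_re, Complex.mul_re]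
    · simp [hgdef, hRgdef, Complex.add_im, Complex.sub_im, Complex.mul_im, f_real hf hs]
  have hfc₁re : (f (c₁:ℂ)).re = c₃ := by rw [hf.val1]; simp
  have hRgpos : ∀ s : ℝ, s ∈ Ioo (-1:ℝ) 1 → c₁ < s → 0 < Rg s := by
    intro s hs hcs
    have hm := f_re_monotone hf hc₁Ioo hs hcs.le
    simp only [hRgdef]
    have : 0 < ε * (s - c₁) := mul_pos hε (by linarith)
    simp only at hm
    rw [hfc₁re] at hm
    linarith
  have hRgneg : ∀ s : ℝ, s ∈ Ioo (-1:ℝ) 1 → s < c₁ → Rg s < 0 := by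
    intro s hs hcs
    have hm := f_re_monotone hf hs hc₁Ioo hcs.le
    simp only [hRgdef]
    have : ε * (s - c₁) < 0 := mul_neg_of_pos_of_neg hε (by linarith)
    simp only at hm
    rw [hfc₁re] at hm
    linarith
  have hRgne : ∀ s : ℝ, s ∈ Ioo (-1:ℝ) 1 → s ≠ c₁ → Rg s ≠ 0 := by
    intro s hs hne
    rcases hne.lt_or_gt with h | h
    · exact (hRgneg s hs h).ne
    · exact (hRgpos s hs h).ne'
  have hg0 : g (c₁:ℂ) = 0 := by simp [hgdef, hf.val1]
  -- derivative of g at c₁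
  have hdgc : HasDerivAt g (deriv f (c₁:ℂ) + ε) (c₁:ℂ) := hgd _ (mem_C1_real hc₁Ioo)
  have hdgcre : ε ≤ (deriv f (c₁:ℂ) + ε).re := by
    simp only [Complex.add_re, Complex.ofReal_re]
    linarith [f_deriv_re_nonneg hf hc₁Ioo]
  have hdgcim : (deriv f (c₁:ℂ) + ε).im = 0 := by
    simp [f_deriv_im hf hc₁Ioo]
  have hdgcne : deriv f (c₁:ℂ) + ε ≠ 0 := by
    intro h0
    have := congrArg Complex.re h0
    simp only [Complex.zero_re] at this
    rw [this] at hdgcre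
    linarith
  -- imaginary parts of the Möbius maps
  have him₀ : ∀ z : ℂ, 0 < z.im → 0 < (g₀ z).im := by
    intro z hz
    have hz1 : (1:ℂ) - z ≠ 0 := by
      intro h0
      have h1' := congrArg Complex.im h0
      simp only [Complex.sub_im, Complex.one_im, Complex.zero_im] at h1'
      have : z.im = 0 := by linarith
      rw [this] at hz; exact lt_irrefl 0 hz
    have hform : (g₀ z).im = z.im * (1 - c₁) / Complex.normSq (1 - z) := by
      rw [hg₀def]
      simp only [Complex.div_im, Complex.sub_re, Complex.sub_im, Complex.ofReal_re,
        Complex.ofReal_im, Complex.one_re, Complex.one_im]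
      rw [div_sub_div_same]
      congr 1
      ring
    rw [hform]
    exact div_pos (mul_pos hz (by linarith)) (Complex.normSq_pos.2 hz1)
  have him₁ : ∀ z : ℂ, 0 < z.im → 0 < (g₁ z).im := by
    intro z hz
    have hz1 : (1:ℂ) + z ≠ 0 := by
      intro h0
      have := congrArg Complex.im h0
      simp at this
      exact hz.ne' this
    have hform : (g₁ z).im = z.im * (1 + c₁) / Complex.normSq (1 + z) := by
      rw [hg₁def]
      simp only [Complex.div_im, Complex.sub_re, Complex.sub_im, Complex.ofReal_re,
        Complex.ofReal_im, Complex.add_re, Complex.add_im, Complex.one_re, Complex.one_im]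
      rw [div_sub_div_same]
      congr 1
      ring
    rw [hform]
    exact div_pos (mul_pos hz (by linarith)) (Complex.normSq_pos.2 hz1)
  -- non-vanishing denominators
  have hsub1 : ∀ z : ℂ, z.im ≠ 0 → (1:ℂ) - z ≠ 0 := by
    intro z hz h0
    have h1' := congrArg Complex.im h0
    simp only [Complex.sub_im, Complex.one_im, Complex.zero_im] at h1'
    exact hz (by linarith)
  have hadd1 : ∀ z : ℂ, z.im ≠ 0 → (1:ℂ) + z ≠ 0 := by
    intro z hz h0
    have h1' := congrArg Complex.im h0
    simp only [Complex.add_im, Complex.one_im, Complex.zero_im] at h1'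
    exact hz (by linarith)
  have hsubc : ∀ z : ℂ, z.im ≠ 0 → z - (c₁:ℂ) ≠ 0 := by
    intro z hz h0
    have h1' := congrArg Complex.im h0
    simp only [Complex.sub_im, Complex.ofReal_im, Complex.zero_im] at h1'
    exact hz (by linarith)
  -- differentiability
  have hdg : ∀ z : ℂ, 0 < z.im → DifferentiableAt ℂ g z :=
    fun z hz => (hgd z (mem_C1_of_im hz.ne')).differentiableAt
  have hd₀ : ∀ z : ℂ, 0 < z.im → DifferentiableAt ℂ g₀ z := by
    intro z hz
    exact (differentiableAt_id.sub (differentiableAt_const _)).div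
      ((differentiableAt_const _).sub differentiableAt_id) (hsub1 z hz.ne')
  have hd₁ : ∀ z : ℂ, 0 < z.im → DifferentiableAt ℂ g₁ z := by
    intro z hz
    exact (differentiableAt_id.sub (differentiableAt_const _)).div
      ((differentiableAt_const _).add differentiableAt_id) (hadd1 z hz.ne')
  -- continuity of the Möbius maps at real points
  have hg₀cont : ∀ p : ℝ, p ≠ 1 → ContinuousAt g₀ (p:ℂ) := by
    intro p hp
    apply ContinuousAt.div
    · exact (continuous_id.sub continuous_const).continuousAt
    · exact (continuous_const.sub continuous_id).continuousAt
    · intro h0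
      have := congrArg Complex.re h0
      simp only [Complex.sub_re, Complex.one_re, Complex.ofReal_re, Complex.zero_re] at this
      exact hp (by linarith)
  have hg₁cont : ∀ p : ℝ, p ≠ -1 → ContinuousAt g₁ (p:ℂ) := by
    intro p hp
    apply ContinuousAt.div
    · exact (continuous_id.sub continuous_const).continuousAt
    · exact (continuous_const.add continuous_id).continuousAt
    · intro h0
      have := congrArg Complex.re h0
      simp only [Complex.add_re, Complex.one_re, Complex.ofReal_re, Complex.zero_re] at this
      exact hp (by linarith)
  have hg₀p : ∀ p : ℝ, g₀ (p:ℂ) = (((p - c₁)/(1 - p) : ℝ) : ℂ) := by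
    intro p; rw [hg₀def]; push_cast; ring
  have hg₁p : ∀ p : ℝ, g₁ (p:ℂ) = (((p - c₁)/(1 + p) : ℝ) : ℂ) := by
    intro p; rw [hg₁def]; push_cast; ring
  -- the slope limit at c₁
  have hslope : Tendsto (fun z => g z / (z - (c₁:ℂ))) (𝓝[S] (c₁:ℂ)) (𝓝 (deriv f (c₁:ℂ) + ε)) := by
    have h2 := hasDerivAt_iff_tendsto_slope.1 hdgc
    have h3 : 𝓝[S] ((c₁:ℝ):ℂ) ≤ 𝓝[≠] ((c₁:ℝ):ℂ) := by
      apply nhdsWithin_mono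
      intro z hz
      simp only [mem_compl_iff, mem_singleton_iff]
      intro h0
      rw [h0] at hz
      simp [hSdef] at hz
    apply (h2.mono_left h3).congr'
    filter_upwards [eventually_mem_nhdsWithin] with z hz
    rw [slope_def_field, hg0, sub_zero]
  have hevS : ∀ p : ℝ, ∀ᶠ z in 𝓝[S] (p:ℂ), z ∈ S := fun p => eventually_mem_nhdsWithin
  -- boundary hypothesis for the pair (g, g₀)
  have hbdryA1 : ∀ p : ℝ, p ≠ 1 → p ≠ -1 → ∀ η : ℝ, 0 < η →
      ∃ δ > 0, ∀ z : ℂ, 0 < z.im → dist z (p:ℂ) < δ → arg (g z) - arg (g₀ z) ≤ η := by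
    intro p hp1 hpm1 η hη
    have hu : ∀ᶠ z in 𝓝[S] (p:ℂ), 0 < (g z).im := by
      filter_upwards [hevS p] with z hz; exact hgim z hz
    have hw : ∀ᶠ z in 𝓝[S] (p:ℂ), 0 < (g₀ z).im := by
      filter_upwards [hevS p] with z hz; exact him₀ z hz
    by_cases hpIoo : p ∈ Ioo (-1:ℝ) 1
    · have hquot : ∃ ζ : ℝ, 0 < ζ ∧ Tendsto (fun z => g z / g₀ z) (𝓝[S] (p:ℂ)) (𝓝 ((ζ:ℝ):ℂ)) := by
        by_cases hpc : p = c₁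
        · refine ⟨(deriv f (c₁:ℂ) + ε).re * (1 - c₁), mul_pos (lt_of_lt_of_le hε hdgcre) (by linarith), ?_⟩
          have h5 : Tendsto (fun z : ℂ => 1 - z) (𝓝[S] ((c₁:ℝ):ℂ)) (𝓝 (1 - (c₁:ℂ))) :=
            ((continuous_const.sub continuous_id).tendsto _).mono_left nhdsWithin_le_nhds
          have h6 := hslope.mul h5
          have hval : (deriv f (c₁:ℂ) + ε) * (1 - (c₁:ℂ))
              = ((((deriv f (c₁:ℂ) + ε).re * (1 - c₁) : ℝ)) : ℂ) := by
            apply Complex.ext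
            · simp [Complex.mul_re, hdgcim]
            · simp [Complex.mul_im, hdgcim]
          rw [hval] at h6
          rw [hpc]
          apply h6.congr'
          filter_upwards [hevS c₁] with z hz
          have hz1 : (1:ℂ) - z ≠ 0 := hsub1 z (hz : 0 < z.im).ne'
          have hz2 : z - (c₁:ℂ) ≠ 0 := hsubc z (hz : 0 < z.im).ne'
          rw [hg₀def]
          field_simp
        · have hg₀ne : g₀ (p:ℂ) ≠ 0 := by
            rw [hg₀p p]
            intro h0
            have h0' : (p - c₁)/(1 - p) = 0 := by exact_mod_cast h0
            rcases div_eq_zero_iff.1 h0' with h | h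
            · exact hpc (by linarith)
            · exact hp1 (by linarith)
          have hr₀ : 0 < Rg p / ((p - c₁)/(1 - p)) := by
            rcases Ne.lt_or_gt hpc with h | h
            · exact div_pos_of_neg_of_neg (hRgneg p hpIoo h)
                (div_neg_of_neg_of_pos (by linarith) (by linarith [hpIoo.2]))
            · exact div_pos (hRgpos p hpIoo h)
                (div_pos (by linarith) (by linarith [hpIoo.2]))
          refine ⟨_, hr₀, ?_⟩
          have hcg : ContinuousAt (fun z => g z / g₀ z) (p:ℂ) :=
            ((hgd _ (mem_C1_real hpIoo)).differentiableAt.continuousAt).div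
              (hg₀cont p hp1) hg₀ne
          have hval : g (p:ℂ) / g₀ (p:ℂ) = ((Rg p / ((p - c₁)/(1 - p)) : ℝ) : ℂ) := by
            rw [hgofReal p hpIoo, hg₀p p, ← Complex.ofReal_div]
          have h7 := hcg.tendsto.mono_left (nhdsWithin_le_nhds : 𝓝[S] ((p:ℝ):ℂ) ≤ 𝓝 _)
          rwa [hval] at h7
      obtain ⟨ζ, hζ, htend⟩ := hquot
      have hts := tendsto_arg_sub_zero hu hw (by simpa using hζ) (by simp) htend
      have hev : ∀ᶠ z in 𝓝[S] (p:ℂ), arg (g z) - arg (g₀ z) < η :=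
        hts.eventually_lt_const hη
      exact nhdsWithin_to_delta (by filter_upwards [hev] with z hz; exact hz.le)
    · have hple : p < -1 ∨ 1 < p := by
        simp only [mem_Ioo, not_and_or, not_lt] at hpIoo
        rcases hpIoo with h | h
        · left
          rcases lt_or_eq_of_le h with h' | h'
          · exact h'
          · exact absurd h' hpm1
        · right
          rcases lt_or_eq_of_le h with h' | h'
          · exact h'
          · exact absurd h'.symm hp1
      have hr₀neg : (p - c₁)/(1 - p) < 0 := by
        rcases hple with h | h
        · exact div_neg_of_neg_of_pos (by linarith) (by linarith)
        · exact div_neg_of_pos_of_neg (by linarith) (by linarith)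
      have hg₀tend : Tendsto g₀ (𝓝[S] (p:ℂ)) (𝓝 (((p - c₁)/(1 - p) : ℝ) : ℂ)) := by
        rw [← hg₀p p]
        exact (hg₀cont p hp1).tendsto.mono_left nhdsWithin_le_nhds
      have hargpi := tendsto_arg_pi hw hg₀tend
        (by rw [Complex.ofReal_re]; exact hr₀neg) (Complex.ofReal_im _)
      have hev : ∀ᶠ z in 𝓝[S] (p:ℂ), π - η < arg (g₀ z) :=
        hargpi.eventually_const_lt (by linarith)
      apply nhdsWithin_to_delta
      filter_upwards [hev] with z hz
      linarith [Complex.arg_le_pi (g z)]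
  -- hinf for the pair (g, g₀)
  have hinfA1 : ∀ η : ℝ, 0 < η → ∃ R : ℝ, ∀ z : ℂ, 0 < z.im → R ≤ Complex.abs z →
      arg (g z) - arg (g₀ z) ≤ η := by
    intro η hη
    set m := min η (π/2) with hm
    have hmpos : 0 < m := lt_min hη (by linarith)
    have hmlt : m < π := lt_of_le_of_lt (min_le_right _ _) (by linarith)
    have hsin : 0 < Real.sin m := Real.sin_pos_of_pos_of_lt_pi hmpos hmlt
    set s' := min (1/2 : ℝ) (Real.sin m / 2) with hs'
    have hs'pos : 0 < s' := lt_min (by norm_num) (by linarith)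
    have hs'half : s' ≤ 1/2 := min_le_left _ _
    have hs'sin : 2 * s' ≤ Real.sin m := by
      have := min_le_right (1/2:ℝ) (Real.sin m / 2); linarith
    refine ⟨2 + (1 - c₁)/s', ?_⟩
    intro z hz hR
    have hdiv0 : 0 ≤ (1 - c₁)/s' := div_nonneg (by linarith) hs'pos.le
    have habs2 : (2:ℝ) ≤ Complex.abs z := by linarith
    set w := g₀ z with hwdef
    have hz1 : (1:ℂ) - z ≠ 0 := hsub1 z hz.ne'
    have hw1 : w + 1 = (((1 - c₁ : ℝ)):ℂ) / (1 - z) := by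
      rw [hwdef, hg₀def, div_add' _ _ _ hz1]
      congr 1
      push_cast
      ring
    have h1z : Complex.abs z - 1 ≤ Complex.abs (1 - z) := by
      have h := Complex.abs.add_le (z - 1) 1
      have h3 : (z - 1) + 1 = z := by ring
      rw [h3, map_one] at h
      have h2 : Complex.abs (1 - z) = Complex.abs (z - 1) := by
        rw [show (1:ℂ) - z = -(z - 1) by ring, map_neg_eq_map]
      linarith
    have habsw1 : Complex.abs (w + 1) ≤ s' := by
      rw [hw1, map_div₀, Complex.abs_ofReal, abs_of_pos (by linarith : (0:ℝ) < 1 - c₁)]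
      have habspos : 0 < Complex.abs (1 - z) := Complex.abs.pos hz1
      rw [div_le_iff₀ habspos]
      have hge : (1 - c₁)/s' ≤ Complex.abs (1 - z) := by linarith
      calc 1 - c₁ = s' * ((1 - c₁)/s') := by field_simp
        _ ≤ s' * Complex.abs (1 - z) := mul_le_mul_of_nonneg_left hge hs'pos.le
    have himw : 0 < w.im := him₀ z hz
    have himw1 : w.im ≤ s' := by
      have he : w.im = (w + 1).im := by simp
      rw [he]
      exact le_trans (le_trans (le_abs_self _) (Complex.abs_im_le_norm _)) habsw1
    have hrew : w.re < 0 := by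
      have ha1 : w.re = (w + 1).re - 1 := by simp
      have ha2 : (w + 1).re ≤ |(w+1).re| := le_abs_self _
      have ha3 : |(w+1).re| ≤ Complex.abs (w+1) := Complex.abs_re_le_norm _
      rw [ha1]
      linarith
    have habsw : 1 - s' ≤ Complex.abs w := by
      have h4 := Complex.abs.sub_le_add (w+1) w
      have h5 : (w + 1) - w = 1 := by ring
      rw [h5, map_one] at h4
      linarith
    have hquot : w.im / Complex.abs w ≤ Real.sin m := by
      calc w.im / Complex.abs w ≤ s' / (1/2) :=
            div_le_div₀ hs'pos.le himw1 (by norm_num) (by linarith)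
        _ = 2 * s' := by ring
        _ ≤ Real.sin m := hs'sin
    have hπsub := pi_sub_arg_le himw hrew hη (by rw [← hm]; exact hquot)
    linarith [Complex.arg_le_pi (g z)]
  have hA1 : ∀ z : ℂ, 0 < z.im → arg (g z) ≤ arg (g₀ z) :=
    argComparison hdg hd₀ hgim him₀ hbdryA1 hinfA1
  -- boundary hypothesis for the pair (g₁, g)
  have hbdryA2 : ∀ p : ℝ, p ≠ 1 → p ≠ -1 → ∀ η : ℝ, 0 < η →
      ∃ δ > 0, ∀ z : ℂ, 0 < z.im → dist z (p:ℂ) < δ → arg (g₁ z) - arg (g z) ≤ η := by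
    intro p hp1 hpm1 η hη
    have hu : ∀ᶠ z in 𝓝[S] (p:ℂ), 0 < (g₁ z).im := by
      filter_upwards [hevS p] with z hz; exact him₁ z hz
    have hw : ∀ᶠ z in 𝓝[S] (p:ℂ), 0 < (g z).im := by
      filter_upwards [hevS p] with z hz; exact hgim z hz
    by_cases hpIoo : p ∈ Ioo (-1:ℝ) 1
    · have hquot : ∃ ζ : ℝ, 0 < ζ ∧ Tendsto (fun z => g₁ z / g z) (𝓝[S] (p:ℂ)) (𝓝 ((ζ:ℝ):ℂ)) := by
        by_cases hpc : p = c₁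
        · refine ⟨((1+c₁) * (deriv f (c₁:ℂ) + ε).re)⁻¹,
            inv_pos.2 (mul_pos (by linarith) (lt_of_lt_of_le hε hdgcre)), ?_⟩
          have h5 : Tendsto (fun z : ℂ => 1 + z) (𝓝[S] ((c₁:ℝ):ℂ)) (𝓝 (1 + (c₁:ℂ))) :=
            ((continuous_const.add continuous_id).tendsto _).mono_left nhdsWithin_le_nhds
          have h6 := h5.mul hslope
          have hne6 : (1 + (c₁:ℂ)) * (deriv f (c₁:ℂ) + ε) ≠ 0 := by
            apply mul_ne_zero
            · intro h0
              have := congrArg Complex.re h0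
              simp only [Complex.add_re, Complex.one_re, Complex.ofReal_re,
                Complex.zero_re] at this
              linarith
            · exact hdgcne
          have h7 := h6.inv₀ hne6
          have hval : ((1 + (c₁:ℂ)) * (deriv f (c₁:ℂ) + ε))⁻¹
              = (((((1+c₁) * (deriv f (c₁:ℂ) + ε).re)⁻¹ : ℝ)) : ℂ) := by
            rw [Complex.ofReal_inv]
            congr 1
            apply Complex.ext
            · simp [Complex.mul_re, hdgcim]
            · simp [Complex.mul_im, hdgcim]
          rw [hval] at h7
          rw [hpc]
          apply h7.congr'
          filter_upwards [hevS c₁] with z hz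
          have hz1 : (1:ℂ) + z ≠ 0 := hadd1 z (hz : 0 < z.im).ne'
          have hz2 : z - (c₁:ℂ) ≠ 0 := hsubc z (hz : 0 < z.im).ne'
          have hz3 : g z ≠ 0 := hgne z hz
          rw [hg₁def]
          field_simp
        · have hgneP : g (p:ℂ) ≠ 0 := by
            rw [hgofReal p hpIoo]
            intro h0
            exact hRgne p hpIoo hpc (by exact_mod_cast h0)
          have hr₀ : 0 < ((p - c₁)/(1 + p)) / Rg p := by
            rcases Ne.lt_or_gt hpc with h | h
            · exact div_pos_of_neg_of_neg
                (div_neg_of_neg_of_pos (by linarith) (by linarith [hpIoo.1]))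
                (hRgneg p hpIoo h)
            · exact div_pos
                (div_pos (by linarith) (by linarith [hpIoo.1]))
                (hRgpos p hpIoo h)
          refine ⟨_, hr₀, ?_⟩
          have hcg : ContinuousAt (fun z => g₁ z / g z) (p:ℂ) :=
            (hg₁cont p hpm1).div
              ((hgd _ (mem_C1_real hpIoo)).differentiableAt.continuousAt) hgneP
          have hval : g₁ (p:ℂ) / g (p:ℂ) = ((((p - c₁)/(1 + p)) / Rg p : ℝ) : ℂ) := by
            rw [hgofReal p hpIoo, hg₁p p, ← Complex.ofReal_div]
          have h7 := hcg.tendsto.mono_left (nhdsWithin_le_nhds : 𝓝[S] ((p:ℝ):ℂ) ≤ 𝓝 _)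
          rwa [hval] at h7
      obtain ⟨ζ, hζ, htend⟩ := hquot
      have hts := tendsto_arg_sub_zero hu hw (by simpa using hζ) (by simp) htend
      have hev : ∀ᶠ z in 𝓝[S] (p:ℂ), arg (g₁ z) - arg (g z) < η :=
        hts.eventually_lt_const hη
      exact nhdsWithin_to_delta (by filter_upwards [hev] with z hz; exact hz.le)
    · have hple : p < -1 ∨ 1 < p := by
        simp only [mem_Ioo, not_and_or, not_lt] at hpIoo
        rcases hpIoo with h | h
        · left
          rcases lt_or_eq_of_le h with h' | h'
          · exact h'
          · exact absurd h' hpm1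
        · right
          rcases lt_or_eq_of_le h with h' | h'
          · exact h'
          · exact absurd h'.symm hp1
      have hr₁pos : 0 < (p - c₁)/(1 + p) := by
        rcases hple with h | h
        · exact div_pos_of_neg_of_neg (by linarith) (by linarith)
        · exact div_pos (by linarith) (by linarith)
      have hg₁tend : Tendsto g₁ (𝓝[S] (p:ℂ)) (𝓝 (((p - c₁)/(1 + p) : ℝ) : ℂ)) := by
        rw [← hg₁p p]
        exact (hg₁cont p hpm1).tendsto.mono_left nhdsWithin_le_nhds
      have hargz : Tendsto (fun z => arg (g₁ z)) (𝓝[S] (p:ℂ)) (𝓝 0) := by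
        have hsl : (((p - c₁)/(1 + p) : ℝ) : ℂ) ∈ Complex.slitPlane :=
          Or.inl (by rw [Complex.ofReal_re]; exact hr₁pos)
        have := (Complex.continuousAt_arg hsl).tendsto.comp hg₁tend
        rwa [show arg (((p - c₁)/(1 + p) : ℝ) : ℂ) = 0 from
          Complex.arg_eq_zero_iff.2 ⟨by rw [Complex.ofReal_re]; exact hr₁pos.le,
            Complex.ofReal_im _⟩] at this
      have hev : ∀ᶠ z in 𝓝[S] (p:ℂ), arg (g₁ z) < η := hargz.eventually_lt_const hη
      apply nhdsWithin_to_delta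
      filter_upwards [hev, hevS p] with z hz hzS
      have := Complex.arg_nonneg_iff.2 (hgim z hzS).le
      linarith
  -- hinf for the pair (g₁, g)
  have hinfA2 : ∀ η : ℝ, 0 < η → ∃ R : ℝ, ∀ z : ℂ, 0 < z.im → R ≤ Complex.abs z →
      arg (g₁ z) - arg (g z) ≤ η := by
    intro η hη
    set m := min η (π/2) with hm
    have hmpos : 0 < m := lt_min hη (by linarith)
    have hmlt : m < π := lt_of_le_of_lt (min_le_right _ _) (by linarith)
    have hsin : 0 < Real.sin m := Real.sin_pos_of_pos_of_lt_pi hmpos hmlt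
    set s' := min (1/2 : ℝ) (Real.sin m / 2) with hs'
    have hs'pos : 0 < s' := lt_min (by norm_num) (by linarith)
    have hs'half : s' ≤ 1/2 := min_le_left _ _
    have hs'sin : 2 * s' ≤ Real.sin m := by
      have := min_le_right (1/2:ℝ) (Real.sin m / 2); linarith
    refine ⟨2 + (1 + c₁)/s', ?_⟩
    intro z hz hR
    have hdiv0 : 0 ≤ (1 + c₁)/s' := div_nonneg (by linarith) hs'pos.le
    have habs2 : (2:ℝ) ≤ Complex.abs z := by linarith
    set w := g₁ z with hwdef
    have hz1 : (1:ℂ) + z ≠ 0 := hadd1 z hz.ne'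
    have hw1 : w - 1 = ((-(1 + c₁) : ℝ):ℂ) / (1 + z) := by
      rw [hwdef, hg₁def, div_sub' hz1]
      congr 1
      push_cast
      ring
    have h1z : Complex.abs z - 1 ≤ Complex.abs (1 + z) := by
      have h := Complex.abs.add_le (1 + z) (-1)
      have h3 : (1 + z) + (-1) = z := by ring
      rw [h3] at h
      simp only [map_neg_eq_map, map_one] at h
      linarith
    have habsw1 : Complex.abs (w - 1) ≤ s' := by
      rw [hw1, map_div₀, Complex.abs_ofReal]
      rw [abs_of_neg (by linarith : (-(1 + c₁) : ℝ) < 0)]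
      have habspos : 0 < Complex.abs (1 + z) := Complex.abs.pos hz1
      rw [div_le_iff₀ habspos]
      have hge : (1 + c₁)/s' ≤ Complex.abs (1 + z) := by linarith
      calc -(-(1 + c₁)) = s' * ((1 + c₁)/s') := by field_simp
        _ ≤ s' * Complex.abs (1 + z) := mul_le_mul_of_nonneg_left hge hs'pos.le
    have himw : 0 < w.im := him₁ z hz
    have himw1 : w.im ≤ s' := by
      have he : w.im = (w - 1).im := by simp
      rw [he]
      exact le_trans (le_trans (le_abs_self _) (Complex.abs_im_le_norm _)) habsw1
    have hrew : 0 < w.re := by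
      have ha1 : w.re = (w - 1).re + 1 := by simp
      have ha2 : -(w - 1).re ≤ |(w-1).re| := neg_le_abs _
      have ha3 : |(w-1).re| ≤ Complex.abs (w-1) := Complex.abs_re_le_norm _
      rw [ha1]
      linarith
    have habsw : 1 - s' ≤ Complex.abs w := by
      have h4 := Complex.abs.sub_le_add w (w - 1)
      have h5 : w - (w - 1) = 1 := by ring
      rw [h5, map_one] at h4
      linarith
    have hquot : w.im / Complex.abs w ≤ Real.sin m := by
      calc w.im / Complex.abs w ≤ s' / (1/2) :=
            div_le_div₀ hs'pos.le himw1 (by norm_num) (by linarith)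
        _ = 2 * s' := by ring
        _ ≤ Real.sin m := hs'sin
    have hargw := arg_le_of_re_pos hrew hη (by rw [← hm]; exact hquot)
    have := Complex.arg_nonneg_iff.2 (hgim z hz).le
    linarith
  have hA2 : ∀ z : ℂ, 0 < z.im → arg (g₁ z) ≤ arg (g z) :=
    argComparison hd₁ hdg him₁ hgim hbdryA2 hinfA2
  -- ============ Hopf step at x ============
  have hxme : (x:ℂ) ∈ C1 := mem_C1_real hx
  have hxc' : (x:ℂ) - (c₁:ℂ) ≠ 0 := by
    intro h0
    have := congrArg Complex.re h0
    simp only [Complex.sub_re, Complex.ofReal_re, Complex.zero_re] at this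
    exact hxc (by linarith)
  have h1x : (1:ℂ) - (x:ℂ) ≠ 0 := by
    intro h0
    have := congrArg Complex.re h0
    simp only [Complex.sub_re, Complex.one_re, Complex.ofReal_re, Complex.zero_re] at this
    linarith [hx.2]
  have h1x' : (1:ℂ) + (x:ℂ) ≠ 0 := by
    intro h0
    have := congrArg Complex.re h0
    simp only [Complex.add_re, Complex.one_re, Complex.ofReal_re, Complex.zero_re] at this
    linarith [hx.1]
  have hgx : HasDerivAt g (deriv f (x:ℂ) + ↑ε) (x:ℂ) := hgd _ hxme
  set P : ℝ := (deriv f (x:ℂ)).re + ε with hPdef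
  have hdgx_of : deriv f (x:ℂ) + (ε:ℂ) = ((P:ℝ):ℂ) := by
    apply Complex.ext
    · simp [hPdef]
    · simp [f_deriv_im hf hx]
  set rg : ℝ := Rg x with hrgdef
  have hgx_of : g (x:ℂ) = ((rg:ℝ):ℂ) := hgofReal x hx
  have hrgne : rg ≠ 0 := hRgne x hx hxc
  have hgxne : g (x:ℂ) ≠ 0 := by
    rw [hgx_of]; exact_mod_cast hrgne
  have hu' : ∀ᶠ z in 𝓝[S] (x:ℂ), 0 < (g z).im := by
    filter_upwards [hevS x] with z hz; exact hgim z hz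
  have hw₀' : ∀ᶠ z in 𝓝[S] (x:ℂ), 0 < (g₀ z).im := by
    filter_upwards [hevS x] with z hz; exact him₀ z hz
  have hw₁' : ∀ᶠ z in 𝓝[S] (x:ℂ), 0 < (g₁ z).im := by
    filter_upwards [hevS x] with z hz; exact him₁ z hz
  -- ------- first Hopf computation : inequality 2 -------
  have ineq2 : P * (x - c₁) * (1 - x) ≤ (1 - c₁) * rg := by
    set A : ℝ := (1 - x)/(x - c₁) with hAdef
    set Bv : ℝ := ((-1) * (x - c₁) - (1 - x)) / (x - c₁)^2 with hBdef
    have hrqpos : 0 < rg * A := by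
      rcases Ne.lt_or_gt hxc with h | h
      · exact mul_pos_of_neg_of_neg (hRgneg x hx h)
          (div_neg_of_pos_of_neg (by linarith [hx.2]) (by linarith))
      · exact mul_pos (hRgpos x hx h)
          (div_pos (by linarith [hx.2]) (by linarith))
    set q : ℂ → ℂ := fun z => g z * ((1 - z) / (z - (c₁:ℂ))) with hqdef
    have hh : HasDerivAt (fun z : ℂ => (1 - z) / (z - (c₁:ℂ)))
        (((-1) * ((x:ℂ) - c₁) - (1 - (x:ℂ)) * 1) / ((x:ℂ) - c₁)^2) (x:ℂ) := by
      apply HasDerivAt.div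
      · simpa using (hasDerivAt_id (x:ℂ)).const_sub 1
      · simpa using (hasDerivAt_id (x:ℂ)).sub_const (c₁:ℂ)
      · exact hxc'
    have hq'of : (deriv f (x:ℂ) + (ε:ℂ)) * ((1 - (x:ℂ))/((x:ℂ) - c₁))
        + g (x:ℂ) * (((-1) * ((x:ℂ) - c₁) - (1 - (x:ℂ)) * 1) / ((x:ℂ) - c₁)^2)
        = ((P * A + rg * Bv : ℝ) : ℂ) := by
      rw [hdgx_of, hgx_of, hAdef, hBdef]
      push_cast
      ring
    have hq2 : HasDerivAt q (((P * A + rg * Bv : ℝ) : ℂ)) (x:ℂ) := by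
      rw [← hq'of]; exact hgx.mul hh
    have hqx_of : q (x:ℂ) = ((rg * A : ℝ) : ℂ) := by
      rw [hqdef]
      simp only []
      rw [hgx_of, hAdef]
      push_cast
      ring
    -- eventual arg ≤ 0 on the vertical path
    have htendq : Tendsto (fun z => g z / g₀ z) (𝓝[S] (x:ℂ)) (𝓝 ((rg * A : ℝ) : ℂ)) := by
      have hg₀ne : g₀ (x:ℂ) ≠ 0 := by
        rw [hg₀p x]
        intro h0
        have h0' : (x - c₁)/(1 - x) = 0 := by exact_mod_cast h0
        rcases div_eq_zero_iff.1 h0' with h | h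
        · exact hxc (by linarith)
        · linarith [hx.2]
      have hcg : ContinuousAt (fun z => g z / g₀ z) (x:ℂ) :=
        ((hgd _ hxme).differentiableAt.continuousAt).div (hg₀cont x (by linarith [hx.2])) hg₀ne
      have hval : g (x:ℂ) / g₀ (x:ℂ) = ((rg * A : ℝ) : ℂ) := by
        rw [hgx_of, hg₀p x, ← Complex.ofReal_div]
        congr 1
        rw [hAdef]
        field_simp
      have h7 := hcg.tendsto.mono_left (nhdsWithin_le_nhds : 𝓝[S] ((x:ℝ):ℂ) ≤ 𝓝 _)
      rwa [hval] at h7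
    have hdivq := eventually_arg_div_eq hu' hw₀'
      (by rw [Complex.ofReal_re]; exact hrqpos) (Complex.ofReal_im _) htendq
    have hargq0 : ∀ᶠ z in 𝓝[S] (x:ℂ), arg (q z) ≤ 0 := by
      filter_upwards [hdivq, hevS x] with z hdz hzS
      have heq : q z = g z / g₀ z := by
        have hz1 : (1:ℂ) - z ≠ 0 := hsub1 z (hzS : 0 < z.im).ne'
        have hz2 : z - (c₁:ℂ) ≠ 0 := hsubc z (hzS : 0 < z.im).ne'
        rw [hqdef, hg₀def]
        field_simp
      rw [heq, ← hdz]
      linarith [hA1 z hzS]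
    have hpath : ∀ᶠ y : ℝ in 𝓝[>] (0:ℝ), arg (q ((x:ℂ) + (y:ℂ) * Complex.I)) ≤ 0 :=
      tendsto_path.eventually hargq0
    -- derivative of the argument along the vertical path
    have hlin : HasDerivAt (fun w : ℂ => (x:ℂ) + w * Complex.I) Complex.I 0 := by
      simpa using ((hasDerivAt_id (0:ℂ)).mul_const Complex.I).const_add ((x:ℂ))
    have hq0 : ((x:ℂ) + 0 * Complex.I) = (x:ℂ) := by simp
    have hq3 : HasDerivAt q (((P * A + rg * Bv : ℝ) : ℂ)) ((x:ℂ) + 0 * Complex.I) := by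
      rw [hq0]; exact hq2
    have hcomp := hq3.comp (0:ℂ) hlin
    have hslit : q ((x:ℂ) + 0 * Complex.I) ∈ Complex.slitPlane := by
      rw [hq0, hqx_of]
      exact Or.inl (by rw [Complex.ofReal_re]; exact hrqpos)
    have hlog := (hcomp.clog hslit).comp_ofReal
    have hder : HasDerivAt (fun y : ℝ => (Complex.log (q ((x:ℂ) + (y:ℝ) * Complex.I))).im)
        ((((P * A + rg * Bv : ℝ) : ℂ) * Complex.I / q ((x:ℂ) + 0 * Complex.I)).im) 0 := by
      have := Complex.imCLM.hasFDerivAt.comp_hasDerivAt 0 hlog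
      simpa [Function.comp_def] using this
    have hDval : (((P * A + rg * Bv : ℝ) : ℂ) * Complex.I / q ((x:ℂ) + 0 * Complex.I)).im
        = (P * A + rg * Bv) / (rg * A) := by
      rw [hq0, hqx_of, Complex.div_ofReal_im]
      congr 1
      simp
    have hD0 : (((P * A + rg * Bv : ℝ) : ℂ) * Complex.I / q ((x:ℂ) + 0 * Complex.I)).im ≤ 0 := by
      have hsl := hasDerivAt_iff_tendsto_slope.1 hder
      have hmono : 𝓝[>] (0:ℝ) ≤ 𝓝[≠] (0:ℝ) := by
        apply nhdsWithin_mono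
        intro y hy
        simp only [mem_compl_iff, mem_singleton_iff]
        exact ne_of_gt hy
      apply le_of_tendsto (hsl.mono_left hmono)
      filter_upwards [hpath, self_mem_nhdsWithin] with y hy hy0
      have hy0' : (0:ℝ) < y := hy0
      have hℓ0 : (Complex.log (q ((x:ℂ) + ((0:ℝ):ℂ) * Complex.I))).im = 0 := by
        push_cast
        rw [hq0, hqx_of, Complex.log_im]
        exact Complex.arg_eq_zero_iff.2 ⟨by rw [Complex.ofReal_re]; exact hrqpos.le,
          Complex.ofReal_im _⟩
      have hℓy : (Complex.log (q ((x:ℂ) + (y:ℝ) * Complex.I))).im ≤ 0 := by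
        rw [Complex.log_im]
        exact hy
      rw [slope_def_field, hℓ0, sub_zero, sub_zero]
      exact div_nonpos_iff.2 (Or.inr ⟨hℓy, hy0'.le⟩)
    rw [hDval] at hD0
    have hnum : P * A + rg * Bv ≤ 0 := by
      rcases div_nonpos_iff.1 hD0 with ⟨h', h''⟩ | ⟨h', h''⟩
      · linarith
      · exact h'
    have hxc1 : x - c₁ ≠ 0 := sub_ne_zero.2 hxc
    have hexp : (P * A + rg * Bv) * (x - c₁)^2
        = P * (1 - x) * (x - c₁) + rg * ((-1) * (x - c₁) - (1 - x)) := by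
      rw [hAdef, hBdef]
      field_simp
    have hmul := mul_le_mul_of_nonneg_right hnum (sq_nonneg (x - c₁))
    nlinarith [hmul, hexp]
  -- ------- second Hopf computation : inequality 1 -------
  have ineq1 : (1 + c₁) * rg ≤ P * (x - c₁) * (1 + x) := by
    set rq₂ : ℝ := (x - c₁)/((1 + x) * rg) with hrq₂def
    have hrq₂pos : 0 < rq₂ := by
      rcases Ne.lt_or_gt hxc with h | h
      · exact div_pos_of_neg_of_neg (by linarith)
          (mul_neg_of_pos_of_neg (by linarith [hx.1]) (hRgneg x hx h))
      · exact div_pos (by linarith)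
          (mul_pos (by linarith [hx.1]) (hRgpos x hx h))
    set q : ℂ → ℂ := fun z => (z - (c₁:ℂ)) / ((1 + z) * g z) with hqdef
    have hdenne : ((1:ℂ) + (x:ℂ)) * g (x:ℂ) ≠ 0 := mul_ne_zero h1x' hgxne
    have hdend : HasDerivAt (fun z : ℂ => (1 + z) * g z)
        (1 * g (x:ℂ) + (1 + (x:ℂ)) * (deriv f (x:ℂ) + (ε:ℂ))) (x:ℂ) := by
      have hone : HasDerivAt (fun z : ℂ => 1 + z) 1 (x:ℂ) := by
        simpa using (hasDerivAt_id (x:ℂ)).const_add 1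
      exact hone.mul hgx
    have hnumd : HasDerivAt (fun z : ℂ => z - (c₁:ℂ)) 1 (x:ℂ) := (hasDerivAt_id _).sub_const _
    set E : ℝ := ((1 + x) * rg - (x - c₁) * (rg + (1 + x) * P)) / ((1 + x) * rg)^2 with hEdef
    have hq'of : (1 * ((1 + (x:ℂ)) * g (x:ℂ))
        - ((x:ℂ) - c₁) * (1 * g (x:ℂ) + (1 + (x:ℂ)) * (deriv f (x:ℂ) + (ε:ℂ))))
        / ((1 + (x:ℂ)) * g (x:ℂ))^2 = ((E:ℝ):ℂ) := by
      rw [hdgx_of, hgx_of, hEdef]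
      push_cast
      ring
    have hq2 : HasDerivAt q ((E:ℝ):ℂ) (x:ℂ) := by
      rw [← hq'of]; exact hnumd.div hdend hdenne
    have hqx_of : q (x:ℂ) = ((rq₂:ℝ):ℂ) := by
      rw [hqdef]
      simp only []
      rw [hgx_of, hrq₂def]
      push_cast
      ring
    have htendq : Tendsto (fun z => g₁ z / g z) (𝓝[S] (x:ℂ)) (𝓝 ((rq₂:ℝ):ℂ)) := by
      have hcg : ContinuousAt (fun z => g₁ z / g z) (x:ℂ) :=
        (hg₁cont x (by linarith [hx.1])).div
          ((hgd _ hxme).differentiableAt.continuousAt) hgxne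
      have hval : g₁ (x:ℂ) / g (x:ℂ) = ((rq₂:ℝ):ℂ) := by
        rw [hg₁p x, hgx_of, ← Complex.ofReal_div]
        congr 1
        rw [hrq₂def]
        field_simp
      have h7 := hcg.tendsto.mono_left (nhdsWithin_le_nhds : 𝓝[S] ((x:ℝ):ℂ) ≤ 𝓝 _)
      rwa [hval] at h7
    have hdivq := eventually_arg_div_eq hw₁' hu'
      (by rw [Complex.ofReal_re]; exact hrq₂pos) (Complex.ofReal_im _) htendq
    have hargq0 : ∀ᶠ z in 𝓝[S] (x:ℂ), arg (q z) ≤ 0 := by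
      filter_upwards [hdivq, hevS x] with z hdz hzS
      have heq : q z = g₁ z / g z := by
        rw [hqdef, hg₁def]
        simp only []
        rw [div_div]
      rw [heq, ← hdz]
      linarith [hA2 z hzS]
    have hpath : ∀ᶠ y : ℝ in 𝓝[>] (0:ℝ), arg (q ((x:ℂ) + (y:ℂ) * Complex.I)) ≤ 0 :=
      tendsto_path.eventually hargq0
    have hlin : HasDerivAt (fun w : ℂ => (x:ℂ) + w * Complex.I) Complex.I 0 := by
      simpa using ((hasDerivAt_id (0:ℂ)).mul_const Complex.I).const_add ((x:ℂ))
    have hq0 : ((x:ℂ) + 0 * Complex.I) = (x:ℂ) := by simp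
    have hq3 : HasDerivAt q ((E:ℝ):ℂ) ((x:ℂ) + 0 * Complex.I) := by
      rw [hq0]; exact hq2
    have hcomp := hq3.comp (0:ℂ) hlin
    have hslit : q ((x:ℂ) + 0 * Complex.I) ∈ Complex.slitPlane := by
      rw [hq0, hqx_of]
      exact Or.inl (by rw [Complex.ofReal_re]; exact hrq₂pos)
    have hlog := (hcomp.clog hslit).comp_ofReal
    have hder : HasDerivAt (fun y : ℝ => (Complex.log (q ((x:ℂ) + (y:ℝ) * Complex.I))).im)
        ((((E:ℝ):ℂ) * Complex.I / q ((x:ℂ) + 0 * Complex.I)).im) 0 := by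
      have := Complex.imCLM.hasFDerivAt.comp_hasDerivAt 0 hlog
      simpa [Function.comp_def] using this
    have hDval : ((((E:ℝ):ℂ)) * Complex.I / q ((x:ℂ) + 0 * Complex.I)).im = E / rq₂ := by
      rw [hq0, hqx_of, Complex.div_ofReal_im]
      congr 1
      simp
    have hD0 : ((((E:ℝ):ℂ)) * Complex.I / q ((x:ℂ) + 0 * Complex.I)).im ≤ 0 := by
      have hsl := hasDerivAt_iff_tendsto_slope.1 hder
      have hmono : 𝓝[>] (0:ℝ) ≤ 𝓝[≠] (0:ℝ) := by
        apply nhdsWithin_mono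
        intro y hy
        simp only [mem_compl_iff, mem_singleton_iff]
        exact ne_of_gt hy
      apply le_of_tendsto (hsl.mono_left hmono)
      filter_upwards [hpath, self_mem_nhdsWithin] with y hy hy0
      have hy0' : (0:ℝ) < y := hy0
      have hℓ0 : (Complex.log (q ((x:ℂ) + ((0:ℝ):ℂ) * Complex.I))).im = 0 := by
        push_cast
        rw [hq0, hqx_of, Complex.log_im]
        exact Complex.arg_eq_zero_iff.2 ⟨by rw [Complex.ofReal_re]; exact hrq₂pos.le,
          Complex.ofReal_im _⟩
      have hℓy : (Complex.log (q ((x:ℂ) + (y:ℝ) * Complex.I))).im ≤ 0 := by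
        rw [Complex.log_im]
        exact hy
      rw [slope_def_field, hℓ0, sub_zero, sub_zero]
      exact div_nonpos_iff.2 (Or.inr ⟨hℓy, hy0'.le⟩)
    rw [hDval] at hD0
    have hE0 : E ≤ 0 := by
      rcases div_nonpos_iff.1 hD0 with ⟨h', h''⟩ | ⟨h', h''⟩
      · linarith
      · exact h'
    have hdenR : ((1 + x) * rg) ≠ 0 := mul_ne_zero (by linarith [hx.1]) hrgne
    have hden2 : 0 < ((1 + x) * rg)^2 := by
      rcases (sq_nonneg ((1 + x) * rg)).lt_or_eq with h | h
      · exact h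
      · exact absurd (pow_eq_zero_iff (n := 2) (by norm_num) |>.1 h.symm) hdenR
    have hnumle : (1 + x) * rg - (x - c₁) * (rg + (1 + x) * P) ≤ 0 := by
      rw [hEdef] at hE0
      rcases div_nonpos_iff.1 hE0 with ⟨h', h''⟩ | ⟨h', h''⟩
      · linarith
      · exact h'
    nlinarith [hnumle]
  constructor
  · have := ineq1
    simp only [hrgdef, hRgdef, hPdef] at this
    exact this
  · have := ineq2
    simp only [hrgdef, hRgdef, hPdef] at this
    exact this
end inst

theorem stmt6 (c₁ c₂ c₃ c₄ : ℝ)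
    (h1 : -1 < c₁) (h12 : c₁ < c₂) (h2 : c₂ < 1)
    (h3 : -1 < c₃) (h34 : c₃ < c₄) (h4 : c₄ < 1)
    (f : ℂ → ℂ) (hf : MemA1 c₁ c₂ c₃ c₄ f) :
    ∀ x ∈ Set.Ioo (-1 : ℝ) 1,
      ((1 + c₁) * ((f x).re - c₃) ≤
          deriv (fun y : ℝ => (f y).re) x * (x - c₁) * (1 + x) ∧
        deriv (fun y : ℝ => (f y).re) x * (x - c₁) * (1 - x) ≤
          (1 - c₁) * ((f x).re - c₃)) ∧
      (x ≠ c₁ →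
        (1 + c₁) / ((x - c₁) * (1 + x)) ≤
            deriv (fun y : ℝ => (f y).re) x / ((f x).re - c₃) ∧
          deriv (fun y : ℝ => (f y).re) x / ((f x).re - c₃) ≤
            (1 - c₁) / ((x - c₁) * (1 - x))) := by
  intro x hx
  have hc₁Ioo : c₁ ∈ Ioo (-1:ℝ) 1 := ⟨h1, h12.trans h2⟩
  have hfc₁re : (f (c₁:ℂ)).re = c₃ := by rw [hf.val1]; simp
  have hderiv_eq : deriv (fun y : ℝ => (f y).re) x = (deriv f x).re :=
    (f_re_hasDerivAt hf hx).deriv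
  set D : ℝ := (deriv f (x:ℂ)).re with hDdef
  have main : (1 + c₁) * ((f x).re - c₃) ≤ D * (x - c₁) * (1 + x) ∧
      D * (x - c₁) * (1 - x) ≤ (1 - c₁) * ((f x).re - c₃) := by
    by_cases hxc : x = c₁
    · subst hxc
      rw [hfc₁re]
      constructor <;> simp
    · constructor
      · apply le_of_forall_pos_mul (K := (x - c₁) * (1 + x) - (1 + c₁) * (x - c₁))
        intro ε hε
        have h := (eps_main h1 h12 h2 h34 hf hε hx hxc).1
        nlinarith [h]
      · apply le_of_forall_pos_mul (K := (1 - c₁) * (x - c₁) - (x - c₁) * (1 - x))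
        intro ε hε
        have h := (eps_main h1 h12 h2 h34 hf hε hx hxc).2
        nlinarith [h]
  rw [hderiv_eq]
  refine ⟨main, ?_⟩
  intro hxc
  have hsm := f_re_strictMono h1 h12 h2 h34 hf
  rcases Ne.lt_or_gt hxc with h | h
  · -- x < c₁
    have hlt : (f x).re < c₃ := by
      have := hsm hx hc₁Ioo h
      simp only at this
      linarith [hfc₁re ▸ this]
    have hd1 : (0:ℝ) < -((x - c₁) * (1 + x)) := by nlinarith [hx.1]
    have hd2 : (0:ℝ) < -((f x).re - c₃) := by linarith
    have hd3 : (0:ℝ) < -((x - c₁) * (1 - x)) := by nlinarith [hx.2]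
    constructor
    · rw [show (1 + c₁) / ((x - c₁) * (1 + x)) = (-(1 + c₁)) / (-((x - c₁) * (1 + x))) by
          rw [neg_div_neg_eq],
        show D / ((f x).re - c₃) = (-D) / (-((f x).re - c₃)) by rw [neg_div_neg_eq]]
      rw [div_le_div_iff₀ hd1 hd2]
      nlinarith [main.1]
    · rw [show (1 - c₁) / ((x - c₁) * (1 - x)) = (-(1 - c₁)) / (-((x - c₁) * (1 - x))) by
          rw [neg_div_neg_eq],
        show D / ((f x).re - c₃) = (-D) / (-((f x).re - c₃)) by rw [neg_div_neg_eq]]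
      rw [div_le_div_iff₀ hd2 hd3]
      nlinarith [main.2]
  · -- c₁ < x
    have hgt : c₃ < (f x).re := by
      have := hsm hc₁Ioo hx h
      simp only at this
      linarith [hfc₁re ▸ this]
    have hd1 : (0:ℝ) < (x - c₁) * (1 + x) := by nlinarith [hx.1]
    have hd2 : (0:ℝ) < (f x).re - c₃ := by linarith
    have hd3 : (0:ℝ) < (x - c₁) * (1 - x) := by nlinarith [hx.2]
    constructor
    · rw [div_le_div_iff₀ hd1 hd2]
      nlinarith [main.1]
    · rw [div_le_div_iff₀ hd2 hd3]
      nlinarith [main.2]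
end
end

section
/- Let λ ∈ (−1,0), β = √(1−λ), α = 1/(2β), and T(x) = −α·(x+β). Let u be a real-valued function defined and differentiable on an interval (−r, 0] with r > 0, with u(0) = 1, s := u′(0) > 0, and u(x) ≤ 1 for all x ∈ (−r, 0]. Define V(0) = 0 and, for real z ≠ 0 small enough that T(−√(1 − λ(1−z²))) ∈ (−r, 0], V(z) = −sign(z)·√(1 − u(T(−√(1 − λ(1−z²))))). Then V is differentiable at 0 and V′(0) = −α·√(s·|λ|) = −√(−λ·s)/(2·√(1−λ)); in particular V′(0) ≠ 0. -/
open Set Filter Topology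

noncomputable section

theorem stmt16 (lam : ℝ) (hlam : lam ∈ Set.Ioo (-1 : ℝ) 0)
    (r : ℝ) (hr : 0 < r)
    (u : ℝ → ℝ)
    (hu : DifferentiableOn ℝ u (Set.Ioc (-r) 0))
    (hu0 : u 0 = 1)
    (β α s : ℝ) (T V : ℝ → ℝ)
    (hβ : β = Real.sqrt (1 - lam))
    (hα : α = 1 / (2 * β))
    (hT : ∀ x : ℝ, T x = -α * (x + β))
    (hs : s = derivWithin u (Set.Ioc (-r) 0) 0)
    (hspos : 0 < s)
    (hub : ∀ x ∈ Set.Ioc (-r) 0, u x ≤ 1)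
    (hV : ∀ z : ℝ,
      V z = -Real.sign z *
        Real.sqrt (1 - u (T (-Real.sqrt (1 - lam * (1 - z ^ 2)))))) :
    HasDerivAt V (-α * Real.sqrt (s * |lam|)) 0 ∧
    -α * Real.sqrt (s * |lam|) = -Real.sqrt (-lam * s) / (2 * Real.sqrt (1 - lam)) ∧
    -α * Real.sqrt (s * |lam|) ≠ 0 := by
  obtain ⟨hl1, hl0⟩ := hlam
  have h1ml : (0:ℝ) < 1 - lam := by linarith
  have hβpos : 0 < β := hβ ▸ Real.sqrt_pos.mpr h1ml
  have hβsq : β ^ 2 = 1 - lam := by rw [hβ, sq, Real.mul_self_sqrt h1ml.le]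
  have hαpos : 0 < α := by rw [hα]; positivity
  set g : ℝ → ℝ := fun z => T (-Real.sqrt (1 - lam * (1 - z ^ 2))) with hgdef
  set D : ℝ → ℝ := fun z => Real.sqrt (β ^ 2 + lam * z ^ 2) + β with hDdef
  have hDpos : ∀ z, 0 < D z := fun z => by
    have := Real.sqrt_nonneg (β ^ 2 + lam * z ^ 2)
    simp only [hDdef]; linarith
  set h : ℝ → ℝ := fun z => α * lam / D z with hhdef
  have hhneg : ∀ z, h z < 0 := fun z =>
    div_neg_of_neg_of_pos (mul_neg_of_pos_of_neg hαpos hl0) (hDpos z)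
  have hinner : ∀ z : ℝ, |z| ≤ 1 → 0 ≤ β ^ 2 + lam * z ^ 2 := by
    intro z hz
    have hz2 : z ^ 2 ≤ 1 := by nlinarith [abs_nonneg z, sq_abs z]
    nlinarith
  have hrw : ∀ z : ℝ, 1 - lam * (1 - z ^ 2) = β ^ 2 + lam * z ^ 2 := by
    intro z; rw [hβsq]; ring
  have hgh : ∀ z : ℝ, |z| ≤ 1 → g z = h z * z ^ 2 := by
    intro z hz
    have h0 : (0:ℝ) ≤ β ^ 2 + lam * z ^ 2 := hinner z hz
    have ha : Real.sqrt (β ^ 2 + lam * z ^ 2) ^ 2 = β ^ 2 + lam * z ^ 2 :=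
      Real.sq_sqrt h0
    have hD := hDpos z
    simp only [hgdef, hT, hhdef, hrw z]
    rw [div_mul_eq_mul_div, eq_div_iff hD.ne']
    simp only [hDdef]
    nlinarith [ha]
  -- continuity of h at 0 and value
  have hDcont : Continuous D := by
    simp only [hDdef]
    exact (Real.continuous_sqrt.comp (continuous_const.add
      (continuous_const.mul (continuous_pow 2)))).add continuous_const
  have hhcont : ContinuousAt h 0 :=
    ContinuousAt.div continuousAt_const hDcont.continuousAt (hDpos 0).ne'
  have hD0 : D 0 = 2 * β := by
    simp only [hDdef]
    rw [show β ^ 2 + lam * 0 ^ 2 = β ^ 2 by ring, Real.sqrt_sq hβpos.le]; ring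
  have hh0 : h 0 = α * lam / (2 * β) := by simp only [hhdef, hD0]
  -- eventual facts
  have ev1 : ∀ᶠ z in 𝓝 (0:ℝ), |z| ≤ 1 := by
    have : ∀ᶠ z in 𝓝 (0:ℝ), |z - 0| < 1 := eventually_abs_sub_lt 0 one_pos
    filter_upwards [this] with z hz
    rw [sub_zero] at hz; linarith
  have t1 : Tendsto (fun z => h z * z ^ 2) (𝓝 0) (𝓝 0) := by
    have := hhcont.tendsto.mul ((continuous_pow 2).tendsto (0:ℝ))
    simpa using this
  have evr : ∀ᶠ z in 𝓝 (0:ℝ), |h z * z ^ 2 - 0| < r :=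
    t1.eventually (eventually_abs_sub_lt 0 hr)
  have ev_mem : ∀ᶠ z in 𝓝[≠] (0:ℝ), g z ∈ Set.Ioc (-r) 0 \ {0} := by
    filter_upwards [ev1.filter_mono nhdsWithin_le_nhds,
      evr.filter_mono nhdsWithin_le_nhds, self_mem_nhdsWithin] with z hz1 hz2 hz0
    have hz0' : z ≠ 0 := hz0
    have hgz : g z = h z * z ^ 2 := hgh z hz1
    have hz2pos : 0 < z ^ 2 := by positivity
    have hneg : g z < 0 := by
      rw [hgz]; exact mul_neg_of_neg_of_pos (hhneg z) hz2pos
    have habs : |g z| < r := by rw [hgz]; simpa using hz2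
    have : -r < g z := by
      rcases abs_lt.mp habs with ⟨hl, _⟩; linarith
    exact ⟨⟨this, hneg.le⟩, hneg.ne⟩
  -- tendsto of g
  have hgfun : g = fun z => -α * (-Real.sqrt (1 - lam * (1 - z ^ 2)) + β) := by
    funext z; simp only [hgdef, hT]
  have hg0 : g 0 = 0 := by
    rw [hgfun]
    simp only
    rw [show 1 - lam * (1 - (0:ℝ) ^ 2) = 1 - lam by ring, ← hβ]
    ring
  have hgcont : ContinuousAt g 0 := by
    rw [hgfun]
    have c1 : Continuous fun z : ℝ => 1 - lam * (1 - z ^ 2) :=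
      continuous_const.sub (continuous_const.mul (continuous_const.sub (continuous_pow 2)))
    exact (continuous_const.mul
      ((Real.continuous_sqrt.comp c1).neg.add continuous_const)).continuousAt
  have gtend : Tendsto g (𝓝[≠] (0:ℝ)) (𝓝[Set.Ioc (-r) 0 \ {0}] 0) := by
    rw [tendsto_nhdsWithin_iff]
    have hgt0 : Tendsto g (𝓝 0) (𝓝 0) := by
      have := hgcont.tendsto; rwa [hg0] at this
    exact ⟨hgt0.mono_left nhdsWithin_le_nhds, ev_mem⟩
  -- derivative of u
  have hu' : HasDerivWithinAt u s (Set.Ioc (-r) 0) 0 := by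
    have := (hu 0 ⟨by linarith, le_refl 0⟩).hasDerivWithinAt
    rwa [← hs] at this
  have slopeu : Tendsto (slope u 0) (𝓝[Set.Ioc (-r) 0 \ {0}] 0) (𝓝 s) :=
    hasDerivWithinAt_iff_tendsto_slope.mp hu'
  have comp : Tendsto (fun z => slope u 0 (g z)) (𝓝[≠] (0:ℝ)) (𝓝 s) :=
    slopeu.comp gtend
  -- product tendsto
  have prodtend : Tendsto (fun z => -(slope u 0 (g z)) * h z) (𝓝[≠] (0:ℝ))
      (𝓝 (-s * h 0)) :=
    comp.neg.mul (hhcont.tendsto.mono_left nhdsWithin_le_nhds)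
  have eveq : ∀ᶠ z in 𝓝[≠] (0:ℝ),
      (fun z => -(slope u 0 (g z)) * h z) z = (1 - u (g z)) / z ^ 2 := by
    filter_upwards [ev1.filter_mono nhdsWithin_le_nhds, ev_mem,
      self_mem_nhdsWithin] with z hz1 hzm hz0
    have hz0' : z ≠ 0 := hz0
    have hgz : g z = h z * z ^ 2 := hgh z hz1
    have hhz : h z ≠ 0 := (hhneg z).ne
    simp only [slope_def_field, hu0, sub_zero, hgz]
    field_simp
    ring
  have tendF : Tendsto (fun z => (1 - u (g z)) / z ^ 2) (𝓝[≠] (0:ℝ))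
      (𝓝 (-s * h 0)) := prodtend.congr' eveq
  -- limit value
  have hL : -s * h 0 = s * |lam| * α ^ 2 := by
    have hh0' : h 0 = lam * α ^ 2 := by rw [hh0, hα]; ring
    rw [hh0', abs_of_neg hl0]; ring
  have tendS : Tendsto (fun z => -Real.sqrt ((1 - u (g z)) / z ^ 2)) (𝓝[≠] (0:ℝ))
      (𝓝 (-α * Real.sqrt (s * |lam|))) := by
    have := (Real.continuous_sqrt.continuousAt.tendsto.comp (hL ▸ tendF)).neg
    have heq : -Real.sqrt (s * |lam| * α ^ 2) = -α * Real.sqrt (s * |lam|) := by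
      rw [Real.sqrt_mul (by positivity) (α ^ 2), Real.sqrt_sq hαpos.le]
      ring
    rwa [heq] at this
  -- slope of V equals that function eventually
  have hV0 : V 0 = 0 := by
    rw [hV 0, Real.sign_zero]; ring
  have evslope : ∀ᶠ z in 𝓝[≠] (0:ℝ),
      (fun z => -Real.sqrt ((1 - u (g z)) / z ^ 2)) z = slope V 0 z := by
    filter_upwards [ev1.filter_mono nhdsWithin_le_nhds, ev_mem,
      self_mem_nhdsWithin] with z hz1 hzm hz0
    have hz0' : z ≠ 0 := hz0
    have hA : 0 ≤ 1 - u (g z) := by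
      have := hub (g z) hzm.1; linarith
    rw [slope_def_field, hV0, sub_zero, sub_zero, hV z]
    have hgz2 : Real.sqrt ((1 - u (g z)) / z ^ 2)
        = Real.sqrt (1 - u (g z)) / |z| := by
      rw [Real.sqrt_div hA, Real.sqrt_sq_eq_abs]
    rw [hgz2]
    rcases hz0'.lt_or_gt with hlt | hgt
    · rw [Real.sign_of_neg hlt, abs_of_neg hlt]
      field_simp
      rfl
    · rw [Real.sign_of_pos hgt, abs_of_pos hgt]
      field_simp
      rfl
  have hda : HasDerivAt V (-α * Real.sqrt (s * |lam|)) 0 := by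
    rw [hasDerivAt_iff_tendsto_slope]
    exact tendS.congr' evslope
  refine ⟨hda, ?_, ?_⟩
  · rw [abs_of_neg hl0, hα, hβ, mul_comm s (-lam)]
    field_simp
  · have hsq : 0 < Real.sqrt (s * |lam|) :=
      Real.sqrt_pos.mpr (mul_pos hspos (abs_pos.mpr hl0.ne))
    have : 0 < α * Real.sqrt (s * |lam|) := mul_pos hαpos hsq
    intro hcon
    rw [neg_mul] at hcon
    linarith [neg_eq_zero.mp hcon ▸ this]
end
end
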